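/- arXiv:1302.7022 — 7 statements merged into one kernel-verified Lean document; each statement's English description precedes it below -/
import Mathlib

section
/- Let $(X,\mu)$ be a measure space with finite nonzero measure $\mu$, let $q \in (1,\infty)$, let $\varphi : X \to (0,\infty)$ be measurable, and set $\lambda = 1/(q-1)$. Then, with all integrals taken in $[0,\infty]$, $$\inf\Big\{ \int_X \varphi\,\alpha^q \, d\mu \;:\; \alpha : X \to [0,\infty] \text{ measurable},\ \int_X \alpha\, d\mu = 1 \Big\} \;=\; \Big( \int_X \varphi^{-\lambda}\, d\mu \Big)^{-1/\lambda},$$ where the right-hand side is interpreted as $0$ when $\int_X \varphi^{-\lambda} d\mu = \infty$. -/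
open MeasureTheory ENNReal

private lemma rpow_anti {x y : ℝ≥0∞} {z : ℝ} (h : x ≤ y) (hz : z ≤ 0) : y ^ z ≤ x ^ z := by
  rw [← neg_neg z, ENNReal.rpow_neg y, ENNReal.rpow_neg x]
  exact ENNReal.inv_le_inv.mpr (ENNReal.rpow_le_rpow h (by linarith))

/-- For a measure space `(X, μ)` with finite nonzero measure, `q ∈ (1,∞)`,
a measurable `φ : X → (0,∞)` and `λ = 1/(q-1)`, the infimum of `∫ φ α^q dμ` over all
measurable `α : X → [0,∞]` with `∫ α dμ = 1` equals `(∫ φ^{-λ} dμ)^{-1/λ}`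
(interpreted as `0` when the latter integral is infinite, which is how `ENNReal.rpow`
with a negative exponent behaves). -/
theorem stmt0 {X : Type*} [MeasurableSpace X] (μ : Measure X)
    (hμfin : μ Set.univ ≠ ⊤) (hμpos : μ Set.univ ≠ 0)
    (q : ℝ) (hq : 1 < q)
    (φ : X → ℝ) (hφm : Measurable φ) (hφpos : ∀ x, 0 < φ x)
    (lam : ℝ) (hlam : lam = 1 / (q - 1)) :
    (⨅ (α : X → ℝ≥0∞) (_ : Measurable α) (_ : ∫⁻ x, α x ∂μ = 1),
        ∫⁻ x, ENNReal.ofReal (φ x) * α x ^ q ∂μ)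
      = (∫⁻ x, ENNReal.ofReal (φ x) ^ (-lam) ∂μ) ^ (-1 / lam) := by
  have hq0 : (0:ℝ) < q := by linarith
  have hq1 : q - 1 ≠ 0 := by linarith
  have hlampos : 0 < lam := by rw [hlam]; exact div_pos one_pos (by linarith)
  have hkey : -1/lam = 1 - q := by rw [hlam]; field_simp; ring
  have hneg : -1/lam < 0 := by rw [hkey]; linarith
  have hψ0 : ∀ x, ENNReal.ofReal (φ x) ≠ 0 := fun x => by
    simp [ENNReal.ofReal_eq_zero, not_le, hφpos x]
  have hψtop : ∀ x, ENNReal.ofReal (φ x) ≠ ⊤ := fun x => ENNReal.ofReal_ne_top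
  set ψ : X → ℝ≥0∞ := fun x => ENNReal.ofReal (φ x) with hψdef
  have hψm : Measurable ψ := hφm.ennreal_ofReal
  set g : X → ℝ≥0∞ := fun x => ψ x ^ (-lam) with hgdef
  have hgm : Measurable g := hψm.pow_const _
  have hgne : ∀ x, g x ≠ 0 := fun x => by
    simp [hgdef, ENNReal.rpow_eq_zero_iff, hψ0 x, hψtop x]
    exact ⟨fun _ => hlampos.le, fun h => absurd h (hψtop x)⟩
  set I : ℝ≥0∞ := ∫⁻ x, g x ∂μ with hIdef
  have hI0 : I ≠ 0 := by
    intro h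
    rw [hIdef, lintegral_eq_zero_iff hgm] at h
    rw [Filter.EventuallyEq, ae_iff] at h
    apply hμpos
    rw [← h]; congr 1; ext x; simp [hgne x]
  -- Lower bound
  have hlow : ∀ α : X → ℝ≥0∞, Measurable α → (∫⁻ x, α x ∂μ) = 1 →
      I ^ (-1/lam) ≤ ∫⁻ x, ψ x * α x ^ q ∂μ := by
    intro α hαm hα1
    by_cases hItop : I = ⊤
    · rw [hItop, ENNReal.top_rpow_of_neg hneg]; exact zero_le
    set A : ℝ≥0∞ := ∫⁻ x, ψ x * α x ^ q ∂μ with hAdef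
    have hpq : q.HolderConjugate (q/(q-1)) := Real.HolderConjugate.conjExponent hq
    set f : X → ℝ≥0∞ := fun x => ψ x ^ (1/q) * α x with hfdef
    set h : X → ℝ≥0∞ := fun x => ψ x ^ (-(1/q)) with hhdef
    have hH := ENNReal.lintegral_mul_le_Lp_mul_Lq μ hpq
      ((hψm.pow_const _).mul hαm).aemeasurable (hψm.pow_const _).aemeasurable
      (f := f) (g := h)
    have e1 : ∀ x, (f * h) x = α x := by
      intro x
      show ψ x ^ (1/q) * α x * ψ x ^ (-(1/q)) = α x
      rw [mul_right_comm, ← ENNReal.rpow_add _ _ (hψ0 x) (hψtop x)]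
      simp
    have e2 : ∀ x, f x ^ q = ψ x * α x ^ q := by
      intro x
      show (ψ x ^ (1/q) * α x) ^ q = _
      rw [ENNReal.mul_rpow_of_nonneg _ _ hq0.le, ← ENNReal.rpow_mul,
        one_div_mul_cancel hq0.ne', ENNReal.rpow_one]
    have e3 : ∀ x, h x ^ (q/(q-1)) = g x := by
      intro x
      show (ψ x ^ (-(1/q))) ^ (q/(q-1)) = ψ x ^ (-lam)
      rw [← ENNReal.rpow_mul, hlam]
      congr 1
      field_simp
    simp only [e1, e2, e3] at hH
    rw [hα1, ← hAdef, ← hIdef] at hH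
    have h2 : I ^ (-(1/(q/(q-1)))) ≤ A ^ (1/q) := by
      calc I ^ (-(1/(q/(q-1)))) = I ^ (-(1/(q/(q-1)))) * 1 := (mul_one _).symm
        _ ≤ I ^ (-(1/(q/(q-1)))) * (A ^ (1/q) * I ^ (1/(q/(q-1)))) :=
            mul_le_mul_right hH _
        _ = A ^ (1/q) * (I ^ (-(1/(q/(q-1)))) * I ^ (1/(q/(q-1)))) := by ring
        _ = A ^ (1/q) := by
            rw [← ENNReal.rpow_add _ _ hI0 hItop]; simp
    have h3 := ENNReal.rpow_le_rpow h2 hq0.le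
    rw [← ENNReal.rpow_mul, ← ENNReal.rpow_mul, one_div_mul_cancel hq0.ne',
      ENNReal.rpow_one] at h3
    have : -(1/(q/(q-1))) * q = -1/lam := by rw [hkey]; field_simp; ring
    rwa [this] at h3
  refine le_antisymm ?_ (le_iInf fun α => le_iInf fun hm => le_iInf fun h1 => hlow α hm h1)
  by_cases hItop : I = ⊤
  · rw [hItop, ENNReal.top_rpow_of_neg hneg]
    refine ENNReal.le_of_forall_pos_le_add fun ε hε _ => ?_
    rw [zero_add]
    set c : ℕ → ℝ≥0∞ := fun n => ∫⁻ x, min (g x) n ∂μ with hcdef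
    have hcm : ∀ n : ℕ, Measurable fun x => min (g x) (n : ℝ≥0∞) :=
      fun n => hgm.min measurable_const
    have hctop : ∀ n, c n ≠ ⊤ := by
      intro n
      refine ne_of_lt (lt_of_le_of_lt (lintegral_mono fun x => min_le_right _ _) ?_)
      rw [lintegral_const]
      exact ENNReal.mul_lt_top (by simp) hμfin.lt_top
    have hsup : (⨆ n, c n) = ⊤ := by
      have hmono : Monotone fun (n : ℕ) (x : X) => min (g x) (n : ℝ≥0∞) :=
        fun n m hnm x => min_le_min le_rfl (by exact_mod_cast Nat.cast_le.mpr hnm)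
      rw [hcdef]
      rw [← lintegral_iSup hcm hmono]
      have : ∀ x, (⨆ n : ℕ, min (g x) (n:ℝ≥0∞)) = g x := by
        intro x
        rw [← inf_iSup_eq (g x) (fun n : ℕ => (n : ℝ≥0∞))]
        simp [ENNReal.iSup_natCast]
      simp_rw [this]
      exact hItop
    set M : ℝ≥0∞ := (ε : ℝ≥0∞) ^ (1/(1-q)) with hMdef
    have hε0 : (ε : ℝ≥0∞) ≠ 0 := by exact_mod_cast hε.ne'
    have hM0 : M ≠ 0 := by
      simp [hMdef, ENNReal.rpow_eq_zero_iff, hε0]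
    have hMtop : M ≠ ⊤ := by
      simp [hMdef, ENNReal.rpow_eq_top_iff, hε0]
    obtain ⟨n, hn⟩ : ∃ n, M < c n := by
      rw [← lt_iSup_iff, hsup]; exact hMtop.lt_top
    have hcn0 : c n ≠ 0 := by
      intro h
      exact absurd (h ▸ hn) (by simp [pos_iff_ne_zero, hM0])
    have hn0 : (n : ℝ≥0∞) ≠ 0 := by
      intro h
      apply hcn0
      rw [hcdef]
      simp only [h]
      simp
    -- the candidate function
    set α : X → ℝ≥0∞ := fun x => (c n)⁻¹ * min (g x) n with hαdef
    have hαm : Measurable α := (hcm n).const_mul _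
    have hα1 : (∫⁻ x, α x ∂μ) = 1 := by
      rw [hαdef]
      simp only
      rw [lintegral_const_mul _ (hcm n)]
      exact ENNReal.inv_mul_cancel hcn0 (hctop n)
    refine le_trans (iInf_le_of_le α (iInf_le_of_le hαm (iInf_le_of_le hα1 le_rfl))) ?_
    have hpt : ∀ x, ψ x * α x ^ q ≤ ((c n)⁻¹) ^ q * min (g x) n := by
      intro x
      set m : ℝ≥0∞ := min (g x) (n : ℝ≥0∞) with hmdef
      have hm0 : m ≠ 0 :=
        (lt_min (pos_iff_ne_zero.mpr (hgne x)) (pos_iff_ne_zero.mpr hn0)).ne'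
      have hmtop : m ≠ ⊤ := ne_top_of_le_ne_top (ENNReal.natCast_ne_top n) (min_le_right _ _)
      have : ψ x * α x ^ q = ((c n)⁻¹) ^ q * (ψ x * m ^ q) := by
        rw [hαdef]
        simp only
        rw [ENNReal.mul_rpow_of_nonneg _ _ hq0.le]
        ring
      rw [this]
      refine mul_le_mul_right ?_ _
      have hsplit : m ^ q = m ^ (q-1) * m := by
        nth_rw 3 [← ENNReal.rpow_one m]
        rw [← ENNReal.rpow_add _ _ hm0 hmtop]
        congr 1
        ring
      rw [hsplit]
      have h1 : m ^ (q-1) ≤ g x ^ (q-1) :=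
        ENNReal.rpow_le_rpow (min_le_left _ _) (by linarith)
      have h2 : g x ^ (q-1) = ψ x ^ (-1 : ℝ) := by
        rw [hgdef]
        simp only
        rw [← ENNReal.rpow_mul]
        congr 1
        rw [hlam]; field_simp
      calc ψ x * (m ^ (q-1) * m) ≤ ψ x * (ψ x ^ (-1:ℝ) * m) := by
            refine mul_le_mul_right (mul_le_mul_left (h2 ▸ h1) _) _
        _ = (ψ x * ψ x ^ (-1:ℝ)) * m := by ring
        _ = m := by
            rw [ENNReal.rpow_neg_one, ENNReal.mul_inv_cancel (hψ0 x) (hψtop x), one_mul]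
    calc (∫⁻ x, ψ x * α x ^ q ∂μ) ≤ ∫⁻ x, ((c n)⁻¹) ^ q * min (g x) n ∂μ :=
          lintegral_mono hpt
      _ = ((c n)⁻¹) ^ q * c n := by rw [lintegral_const_mul _ (hcm n)]
      _ = c n ^ (1-q) := by
          rw [ENNReal.inv_rpow, ← ENNReal.rpow_neg,
            show (1:ℝ) - q = -q + 1 by ring,
            ENNReal.rpow_add _ _ hcn0 (hctop n), ENNReal.rpow_one]
      _ ≤ M ^ (1-q) := rpow_anti hn.le (by linarith)
      _ = ε := by
          rw [hMdef, ← ENNReal.rpow_mul, one_div_mul_cancel (by linarith : (1:ℝ) - q ≠ 0),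
            ENNReal.rpow_one]
  · -- finite case: optimal α
    set α : X → ℝ≥0∞ := fun x => I⁻¹ * g x with hαdef
    have hαm : Measurable α := hgm.const_mul _
    have hα1 : (∫⁻ x, α x ∂μ) = 1 := by
      rw [hαdef]
      simp only
      rw [lintegral_const_mul _ hgm, ← hIdef]
      exact ENNReal.inv_mul_cancel hI0 hItop
    refine le_trans (iInf_le_of_le α (iInf_le_of_le hαm (iInf_le_of_le hα1 le_rfl))) (le_of_eq ?_)
    have hpt : ∀ x, ψ x * α x ^ q = (I⁻¹) ^ q * g x := by
      intro x
      rw [hαdef]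
      simp only
      rw [ENNReal.mul_rpow_of_nonneg _ _ hq0.le]
      have : ψ x * (g x) ^ q = g x := by
        rw [hgdef]
        simp only
        rw [← ENNReal.rpow_mul]
        nth_rw 1 [← ENNReal.rpow_one (ψ x)]
        rw [← ENNReal.rpow_add _ _ (hψ0 x) (hψtop x)]
        congr 1
        rw [hlam]; field_simp; ring
      calc ψ x * ((I⁻¹) ^ q * g x ^ q) = (I⁻¹) ^ q * (ψ x * g x ^ q) := by ring
        _ = (I⁻¹) ^ q * g x := by rw [this]
    calc (∫⁻ x, ψ x * α x ^ q ∂μ) = ∫⁻ x, (I⁻¹) ^ q * g x ∂μ := by simp_rw [hpt]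
      _ = (I⁻¹) ^ q * I := by rw [lintegral_const_mul _ hgm]
      _ = I ^ (-1/lam) := by
          rw [ENNReal.inv_rpow, ← ENNReal.rpow_neg, hkey,
            show (1:ℝ) - q = -q + 1 by ring,
            ENNReal.rpow_add _ _ hI0 hItop, ENNReal.rpow_one]
end

section
/- Let $p > 1$, $z_0 \in \mathbb{C}$, $0 < r_1 < r_2$, and let $Q : \mathbb{C} \to (0,\infty)$ be measurable such that for almost every $r \in (r_1,r_2)$ one has $0 < \|Q\|_{1/(p-1)}(z_0,r) < \infty$. Then $$\inf\Big\{ \int_{R(z_0,r_1,r_2)} \frac{\varrho(z)^p}{Q(z)}\, dm(z) \;:\; \varrho : \mathbb{C} \to [0,\infty] \text{ measurable},\ \int_0^{2\pi} \varrho(z_0 + re^{i\theta})\, r\, d\theta \ge 1 \text{ for a.e. } r \in (r_1,r_2) \Big\} = \int_{r_1}^{r_2} \frac{dr}{\|Q\|_{1/(p-1)}(z_0,r)}.$$ -/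
open MeasureTheory ENNReal Real

/-- The arclength integral `∫_{C(z₀,r)} Q^e |dz| = ∫_0^{2π} Q(z₀ + r e^{iθ})^e · r dθ`
of the `e`-th power of a positive function `Q` over the circle of radius `r`
centered at `z₀`, with values in `[0,∞]`. -/
noncomputable def circlePowInt (Q : ℂ → ℝ) (e : ℝ) (z0 : ℂ) (r : ℝ) : ℝ≥0∞ :=
  ∫⁻ θ in Set.Ioc (0 : ℝ) (2 * π),
    ENNReal.ofReal (Q (z0 + (r : ℂ) * Complex.exp ((θ : ℂ) * Complex.I))) ^ e
      * ENNReal.ofReal r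

/-- `‖Q‖_{1/(p-1)}(z₀,r) = (∫_{C(z₀,r)} Q^{1/(p-1)} |dz|)^{p-1}`. -/
noncomputable def normQ (Q : ℂ → ℝ) (p : ℝ) (z0 : ℂ) (r : ℝ) : ℝ≥0∞ :=
  circlePowInt Q (1 / (p - 1)) z0 r ^ (p - 1)

/-- The annulus `R(z₀,r₁,r₂) = {z ∈ ℂ : r₁ < |z - z₀| < r₂}`. -/
def annulus (z0 : ℂ) (r1 r2 : ℝ) : Set ℂ :=
  {z : ℂ | r1 < ‖z - z0‖ ∧ ‖z - z0‖ < r2}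

/- ### Auxiliary lemmas -/

lemma im_line_null (c : ℝ) : volume {z : ℂ | z.im = c} = 0 := by
  have h : {z : ℂ | z.im = c}
      = Complex.measurableEquivRealProd ⁻¹' (Set.univ ×ˢ {c}) := by
    ext z
    simp [Complex.measurableEquivRealProd, Set.mem_prod]
  rw [h, Complex.volume_preserving_equiv_real_prod.measure_preimage
    (MeasurableSet.univ.prod (measurableSet_singleton c)).nullMeasurableSet]
  rw [Measure.volume_eq_prod, Measure.prod_prod]
  simp

/-- Polar coordinates for the lower Lebesgue integral over an annulus. -/
lemma polar_lintegral (z0 : ℂ) {r1 r2 : ℝ} (hr1 : 0 < r1) (hr12 : r1 < r2)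
    (g : ℂ → ℝ≥0∞) (hg : Measurable g) :
    ∫⁻ z in annulus z0 r1 r2, g z =
      ∫⁻ r in Set.Ioo r1 r2, ∫⁻ θ in Set.Ioc (0:ℝ) (2*π),
        g (z0 + (r:ℂ) * Complex.exp ((θ:ℂ) * Complex.I)) * ENNReal.ofReal r := by
  set F : ℝ × ℝ → ℂ := fun q => z0 + (q.1 : ℂ) * Complex.exp ((q.2 : ℂ) * Complex.I) with hF
  set f : ℝ × ℝ → ℝ × ℝ := fun q => (z0.re, z0.im) + polarCoord.symm q with hf
  set s : Set (ℝ × ℝ) := Set.Ioo r1 r2 ×ˢ Set.Ioo 0 (2*π) with hs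
  have hsm : MeasurableSet s := measurableSet_Ioo.prod measurableSet_Ioo
  have hEF : ∀ q, Complex.measurableEquivRealProd.symm (f q) = F q := by
    intro q
    show Complex.equivRealProd.symm (f q) = F q
    rw [Complex.equivRealProd_symm_apply]
    have hexp : Complex.exp ((q.2:ℂ) * Complex.I)
        = (Real.cos q.2 : ℂ) + (Real.sin q.2 : ℂ) * Complex.I := by
      rw [Complex.exp_mul_I, Complex.ofReal_cos, Complex.ofReal_sin]
    simp only [hf, hF, polarCoord_symm_apply, Prod.fst_add, Prod.snd_add, hexp]
    apply Complex.ext <;> simp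
  have hFmeas : Measurable F := by
    apply Measurable.add measurable_const
    exact (Complex.measurable_ofReal.comp measurable_fst).mul
      (Complex.measurable_exp.comp
        ((Complex.measurable_ofReal.comp measurable_snd).mul measurable_const))
  have hFinj : Set.InjOn F s := by
    rintro ⟨r, θ⟩ hq ⟨r', θ'⟩ hq' h
    obtain ⟨hr, hθ⟩ := hq
    obtain ⟨hr', hθ'⟩ := hq'
    simp only [hF] at h
    have h2 : (r:ℂ) * Complex.exp ((θ:ℂ) * Complex.I)
        = (r':ℂ) * Complex.exp ((θ':ℂ) * Complex.I) := by
      exact add_left_cancel h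
    have hr0 : (0:ℝ) < r := hr1.trans hr.1
    have hr0' : (0:ℝ) < r' := hr1.trans hr'.1
    have hrr : r = r' := by
      have := congrArg norm h2
      simpa [Complex.norm_exp_ofReal_mul_I, Complex.norm_real, Real.norm_eq_abs, abs_of_pos hr0, abs_of_pos hr0'] using this
    subst hrr
    have hexp : Complex.exp ((θ:ℂ) * Complex.I) = Complex.exp ((θ':ℂ) * Complex.I) :=
      mul_left_cancel₀ (by exact_mod_cast hr0.ne') h2
    obtain ⟨n, hn⟩ := Complex.exp_eq_exp_iff_exists_int.mp hexp
    have hn' : (θ:ℂ) = ((θ' + n * (2*π) : ℝ) : ℂ) := by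
      have : (θ:ℂ) * Complex.I = ((θ' + n * (2*π) : ℝ) : ℂ) * Complex.I := by
        rw [hn]; push_cast; ring
      exact mul_right_cancel₀ Complex.I_ne_zero this
    have hθeq : θ = θ' + n * (2*π) := by exact_mod_cast hn'
    have hπ := Real.pi_pos
    have hn0 : n = 0 := by
      rcases lt_trichotomy n 0 with hlt | h0 | hgt
      · have : (n:ℝ) ≤ -1 := by exact_mod_cast Int.le_sub_one_of_lt hlt
        nlinarith [hθ.1, hθ.2, hθ'.1, hθ'.2]
      · exact h0
      · have : (1:ℝ) ≤ n := by exact_mod_cast hgt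
        nlinarith [hθ.1, hθ.2, hθ'.1, hθ'.2]
    subst hn0
    simp at hθeq
    exact Prod.ext rfl hθeq
  have hsub : F '' s ⊆ annulus z0 r1 r2 := by
    rintro _ ⟨⟨r, θ⟩, ⟨hr, hθ⟩, rfl⟩
    have hr0 : (0:ℝ) < r := hr1.trans hr.1
    constructor <;>
      simp only [hF, add_sub_cancel_left, norm_mul, Complex.norm_real, Real.norm_eq_abs,
        Complex.norm_exp_ofReal_mul_I, mul_one, abs_of_pos hr0]
    · exact hr.1
    · exact hr.2
  have hdiff : annulus z0 r1 r2 \ F '' s ⊆ {z : ℂ | z.im = z0.im} := by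
    rintro z ⟨hz, hz2⟩
    by_contra him
    apply hz2
    set w := z - z0 with hw
    have hwim : w.im ≠ 0 := by
      simp only [hw, Complex.sub_im]
      exact sub_ne_zero.mpr him
    have hπ := Real.pi_pos
    set θ0 := w.arg with hθ0
    have harg1 : -π < θ0 := Complex.neg_pi_lt_arg w
    have harg2 : θ0 ≤ π := Complex.arg_le_pi w
    have hargne : θ0 ≠ 0 := fun h => hwim (Complex.arg_eq_zero_iff.mp h).2
    have hargnepi : θ0 ≠ π := fun h => hwim (Complex.arg_eq_pi_iff.mp h).2
    have habs : ‖w‖ ∈ Set.Ioo r1 r2 := ⟨hz.1, hz.2⟩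
    set θ : ℝ := if 0 < θ0 then θ0 else θ0 + 2*π with hθdef
    have hθmem : θ ∈ Set.Ioo 0 (2*π) := by
      rw [hθdef]
      split_ifs with hpos
      · exact ⟨hpos, by nlinarith [lt_of_le_of_ne harg2 hargnepi]⟩
      · push_neg at hpos
        have : θ0 < 0 := lt_of_le_of_ne hpos hargne
        constructor <;> nlinarith
    have hexpθ : Complex.exp ((θ:ℂ) * Complex.I) = Complex.exp ((θ0:ℂ) * Complex.I) := by
      rw [hθdef]
      split_ifs with hpos
      · rfl
      · push_cast
        rw [add_mul, Complex.exp_add]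
        norm_num [Complex.exp_two_pi_mul_I]
    refine ⟨(‖w‖, θ), ⟨habs, hθmem⟩, ?_⟩
    simp only [hF, hexpθ]
    rw [hθ0, Complex.norm_mul_exp_arg_mul_I]
    rw [hw]
    ring
  have h0 : volume (annulus z0 r1 r2 \ F '' s) = 0 :=
    measure_mono_null hdiff (im_line_null z0.im)
  have himage : annulus z0 r1 r2 =ᵐ[volume] F '' s := by
    rw [MeasureTheory.ae_eq_set]
    refine ⟨h0, ?_⟩
    rw [Set.diff_eq_empty.mpr hsub]
    exact measure_empty
  have hfinj : Set.InjOn f s := by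
    intro q hq q' hq' h
    apply hFinj hq hq'
    rw [← hEF, ← hEF, h]
  set B : ℝ × ℝ → ℝ × ℝ →L[ℝ] ℝ × ℝ := fun q =>
    LinearMap.toContinuousLinearMap (Matrix.toLin (Module.Basis.finTwoProd ℝ) (Module.Basis.finTwoProd ℝ)
      !![Real.cos q.2, -q.1 * Real.sin q.2; Real.sin q.2, q.1 * Real.cos q.2]) with hB
  have hBdet : ∀ q, (B q).det = q.1 := by
    intro q
    conv_rhs => rw [← one_mul q.1, ← Real.cos_sq_add_sin_sq q.2]
    simp only [hB, neg_mul, LinearMap.det_toContinuousLinearMap, LinearMap.det_toLin,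
      Matrix.det_fin_two_of, sub_neg_eq_add]
    ring
  have hderiv : ∀ q ∈ s, HasFDerivWithinAt f (B q) s q := fun q _ =>
    ((hasFDerivAt_polarCoord_symm q).const_add (z0.re, z0.im)).hasFDerivWithinAt
  calc ∫⁻ z in annulus z0 r1 r2, g z
      = ∫⁻ z in F '' s, g z := setLIntegral_congr himage
    _ = ∫⁻ q in f '' s, g (Complex.measurableEquivRealProd.symm q) := by
        rw [(Complex.volume_preserving_equiv_real_prod.symm Complex.measurableEquivRealProd).setLIntegral_comp_emb
          Complex.measurableEquivRealProd.symm.measurableEmbedding g (f '' s),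
          ← Set.image_comp]
        congr 2
        exact (Set.image_congr fun q _ => hEF q).symm
    _ = ∫⁻ q in s, ENNReal.ofReal |(B q).det|
          * g (Complex.measurableEquivRealProd.symm (f q)) :=
        lintegral_image_eq_lintegral_abs_det_fderiv_mul volume hsm hderiv hfinj _
    _ = ∫⁻ q in s, ENNReal.ofReal q.1 * g (F q) := by
        apply setLIntegral_congr_fun hsm
        intro q hq
        dsimp only
        rw [hBdet, hEF, abs_of_pos (hr1.trans hq.1.1)]
    _ = ∫⁻ r in Set.Ioo r1 r2, ∫⁻ θ in Set.Ioo 0 (2*π),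
          ENNReal.ofReal r * g (F (r, θ)) := by
        rw [hs, Measure.volume_eq_prod, ← Measure.prod_restrict]
        exact lintegral_prod _
          ((measurable_fst.ennreal_ofReal.mul (hg.comp hFmeas))).aemeasurable
    _ = ∫⁻ r in Set.Ioo r1 r2, ∫⁻ θ in Set.Ioc (0:ℝ) (2*π),
          g (z0 + (r:ℂ) * Complex.exp ((θ:ℂ) * Complex.I)) * ENNReal.ofReal r := by
        apply lintegral_congr fun r => ?_
        rw [setLIntegral_congr MeasureTheory.Ioo_ae_eq_Ioc]
        exact lintegral_congr fun θ => mul_comm _ _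

/-- Abstract Hölder lower bound. -/
lemma holder_lower {α : Type*} [MeasurableSpace α] (μ : Measure α) (p : ℝ) (hp : 1 < p)
    (Φ W : α → ℝ≥0∞) (hΦ : AEMeasurable Φ μ) (hW : AEMeasurable W μ)
    (hW0 : ∀ x, W x ≠ 0) (hWt : ∀ x, W x ≠ ⊤)
    (hB0 : (∫⁻ x, W x ^ (1/(p-1)) ∂μ) ≠ 0) (hBt : (∫⁻ x, W x ^ (1/(p-1)) ∂μ) ≠ ⊤)
    (h1 : 1 ≤ ∫⁻ x, Φ x ∂μ) :
    ((∫⁻ x, W x ^ (1/(p-1)) ∂μ) ^ (p-1))⁻¹ ≤ ∫⁻ x, Φ x ^ p / W x ∂μ := by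
  have hp0 : (0:ℝ) < p := lt_trans one_pos hp
  have hp1 : (0:ℝ) < p - 1 := by linarith
  set q : ℝ := p / (p - 1) with hq
  have hpq : p.HolderConjugate q := (Real.holderConjugate_iff_eq_conjExponent hp).2 hq
  set A := ∫⁻ x, Φ x ^ p / W x ∂μ with hA
  set Bq := ∫⁻ x, W x ^ (1/(p-1)) ∂μ with hBq
  have key := ENNReal.lintegral_mul_le_Lp_mul_Lq μ hpq
    (f := fun x => Φ x * W x ^ (-(1/p))) (g := fun x => W x ^ (1/p))
    (hΦ.mul (hW.pow_const _)) (hW.pow_const _)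
  have hfg : ∀ x, ((fun x => Φ x * W x ^ (-(1/p))) * fun x => W x ^ (1/p)) x = Φ x := by
    intro x
    simp only [Pi.mul_apply]
    rw [mul_assoc, ← ENNReal.rpow_add _ _ (hW0 x) (hWt x)]
    norm_num
  have hfp : ∀ x, (Φ x * W x ^ (-(1/p))) ^ p = Φ x ^ p / W x := by
    intro x
    rw [ENNReal.mul_rpow_of_nonneg _ _ hp0.le, ← ENNReal.rpow_mul]
    have : -(1/p) * p = -1 := by field_simp
    rw [this, ENNReal.rpow_neg_one, div_eq_mul_inv]
  have hgq : ∀ x, (W x ^ (1/p)) ^ q = W x ^ (1/(p-1)) := by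
    intro x
    rw [← ENNReal.rpow_mul]
    congr 1
    rw [hq]; field_simp
  simp only [hfg, hfp, hgq] at key
  -- key : ∫ Φ ≤ A ^ (1/p) * Bq ^ (1/q)
  have hkey2 : (1:ℝ≥0∞) ≤ A ^ (1/p) * Bq ^ (1/q) := le_trans h1 key
  have hBq0 : Bq ^ (1/q) ≠ 0 := by
    simp only [ne_eq, ENNReal.rpow_eq_zero_iff, not_or]
    constructor
    · rintro ⟨h, -⟩; exact hB0 h
    · rintro ⟨h, -⟩; exact hBt h
  have hBqt : Bq ^ (1/q) ≠ ⊤ := by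
    simp only [ne_eq, ENNReal.rpow_eq_top_iff, not_or]
    constructor
    · rintro ⟨h, -⟩; exact hB0 h
    · rintro ⟨h, -⟩; exact hBt h
  have hstep : (Bq ^ (1/q))⁻¹ ≤ A ^ (1/p) := by
    calc (Bq ^ (1/q))⁻¹ = 1 * (Bq ^ (1/q))⁻¹ := (one_mul _).symm
      _ ≤ (A ^ (1/p) * Bq ^ (1/q)) * (Bq ^ (1/q))⁻¹ := mul_le_mul_left hkey2 _
      _ = A ^ (1/p) * (Bq ^ (1/q) * (Bq ^ (1/q))⁻¹) := by rw [mul_assoc]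
      _ = A ^ (1/p) := by rw [ENNReal.mul_inv_cancel hBq0 hBqt, mul_one]
  have hmono := ENNReal.rpow_le_rpow hstep hp0.le
  rw [ENNReal.inv_rpow, ← ENNReal.rpow_mul, ← ENNReal.rpow_mul] at hmono
  have h1q : 1/q * p = p - 1 := by rw [hq]; field_simp
  have h1p : 1/p * p = 1 := by field_simp
  rw [h1q, h1p, ENNReal.rpow_one] at hmono
  exact hmono

/-- For `p > 1`, `0 < r₁ < r₂` and measurable `Q : ℂ → (0,∞)` with
`0 < ‖Q‖_{1/(p-1)}(z₀,r) < ∞` for a.e. `r ∈ (r₁,r₂)`, the infimum of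
`∫_{R(z₀,r₁,r₂)} ϱ^p/Q dm` over all measurable `ϱ : ℂ → [0,∞]` whose arclength
integral over the circle `|z-z₀| = r` is at least `1` for a.e. `r ∈ (r₁,r₂)` equals
`∫_{r₁}^{r₂} dr / ‖Q‖_{1/(p-1)}(z₀,r)`. -/
theorem stmt4 (p : ℝ) (hp : 1 < p) (z0 : ℂ) (r1 r2 : ℝ) (hr1 : 0 < r1) (hr12 : r1 < r2)
    (Q : ℂ → ℝ) (hQm : Measurable Q) (hQpos : ∀ z, 0 < Q z)
    (hQn : ∀ᵐ r ∂(volume.restrict (Set.Ioo r1 r2)),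
      0 < normQ Q p z0 r ∧ normQ Q p z0 r < ⊤) :
    (⨅ (ϱ : ℂ → ℝ≥0∞) (_ : Measurable ϱ)
        (_ : ∀ᵐ (r : ℝ) ∂(volume.restrict (Set.Ioo r1 r2)),
          1 ≤ ∫⁻ θ in Set.Ioc (0 : ℝ) (2 * π),
                ϱ (z0 + (r : ℂ) * Complex.exp ((θ : ℂ) * Complex.I))
                  * ENNReal.ofReal r),
        ∫⁻ z in annulus z0 r1 r2, ϱ z ^ p / ENNReal.ofReal (Q z) ∂volume)
      = ∫⁻ r in Set.Ioo r1 r2, (normQ Q p z0 r)⁻¹ ∂volume := by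
  have hp0 : (0:ℝ) < p := lt_trans one_pos hp
  have hp1 : (0:ℝ) < p - 1 := by linarith
  have hQ0 : ∀ z, ENNReal.ofReal (Q z) ≠ 0 := fun z => (ENNReal.ofReal_pos.mpr (hQpos z)).ne'
  have hQt : ∀ z, ENNReal.ofReal (Q z) ≠ ⊤ := fun z => ENNReal.ofReal_ne_top
  -- measurability of the circle map and of r ↦ circlePowInt
  have hγmeas : Measurable (fun q : ℝ × ℝ =>
      z0 + (q.1:ℂ) * Complex.exp ((q.2:ℂ) * Complex.I)) := by
    apply Measurable.add measurable_const
    exact (Complex.measurable_ofReal.comp measurable_fst).mul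
      (Complex.measurable_exp.comp
        ((Complex.measurable_ofReal.comp measurable_snd).mul measurable_const))
  have hIm : Measurable (fun r => circlePowInt Q (1/(p-1)) z0 r) := by
    have h : Measurable (Function.uncurry fun (r θ : ℝ) =>
        ENNReal.ofReal (Q (z0 + (r:ℂ) * Complex.exp ((θ:ℂ) * Complex.I))) ^ (1/(p-1))
          * ENNReal.ofReal r) := by
      apply Measurable.mul
      · exact ((hQm.comp hγmeas).ennreal_ofReal.pow_const _)
      · exact measurable_fst.ennreal_ofReal
    exact h.lintegral_prod_right
  -- a.e. facts about circlePowInt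
  have hae : ∀ᵐ r ∂(volume.restrict (Set.Ioo r1 r2)),
      r ∈ Set.Ioo r1 r2 ∧ circlePowInt Q (1/(p-1)) z0 r ≠ 0
        ∧ circlePowInt Q (1/(p-1)) z0 r ≠ ⊤ := by
    filter_upwards [hQn, ae_restrict_mem measurableSet_Ioo] with r hr hmem
    refine ⟨hmem, ?_, ?_⟩
    · intro h
      rw [normQ, h, ENNReal.zero_rpow_of_pos hp1] at hr
      exact lt_irrefl 0 hr.1
    · intro h
      rw [normQ, h, ENNReal.top_rpow_of_pos hp1] at hr
      exact lt_irrefl ⊤ hr.2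
  have habs : ∀ (r : ℝ), 0 < r → ∀ θ : ℝ,
      ‖z0 + (r:ℂ) * Complex.exp ((θ:ℂ) * Complex.I) - z0‖ = r := by
    intro r hr0 θ
    rw [add_sub_cancel_left, norm_mul, Complex.norm_real, Real.norm_eq_abs, Complex.norm_exp_ofReal_mul_I,
      mul_one, abs_of_pos hr0]
  -- the extremal candidate
  set ϱ0 : ℂ → ℝ≥0∞ := fun z => ENNReal.ofReal (Q z) ^ (1/(p-1))
      * (circlePowInt Q (1/(p-1)) z0 ‖z - z0‖)⁻¹ with hϱ0
  have hϱ0m : Measurable ϱ0 := by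
    apply (hQm.ennreal_ofReal.pow_const _).mul
    exact (hIm.comp
      (continuous_norm.comp (continuous_id.sub continuous_const)).measurable).inv
  -- candidate satisfies the constraint
  have hcon0 : ∀ᵐ (r : ℝ) ∂(volume.restrict (Set.Ioo r1 r2)),
      1 ≤ ∫⁻ θ in Set.Ioc (0 : ℝ) (2 * π),
            ϱ0 (z0 + (r : ℂ) * Complex.exp ((θ : ℂ) * Complex.I)) * ENNReal.ofReal r := by
    filter_upwards [hae] with r hr
    obtain ⟨hmem, hI0, hIt⟩ := hr
    have hr0 : (0:ℝ) < r := hr1.trans hmem.1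
    have hpt : ∀ θ : ℝ,
        ϱ0 (z0 + (r : ℂ) * Complex.exp ((θ : ℂ) * Complex.I)) * ENNReal.ofReal r
          = (ENNReal.ofReal (Q (z0 + (r : ℂ) * Complex.exp ((θ : ℂ) * Complex.I))) ^ (1/(p-1))
              * ENNReal.ofReal r) * (circlePowInt Q (1/(p-1)) z0 r)⁻¹ := by
      intro θ
      simp only [hϱ0, habs r hr0 θ]
      ring
    rw [lintegral_congr hpt,
      lintegral_mul_const' _ _ (ENNReal.inv_ne_top.mpr hI0)]
    have hIdef : (∫⁻ θ in Set.Ioc (0 : ℝ) (2 * π),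
        ENNReal.ofReal (Q (z0 + (r : ℂ) * Complex.exp ((θ : ℂ) * Complex.I))) ^ (1/(p-1))
          * ENNReal.ofReal r) = circlePowInt Q (1/(p-1)) z0 r := rfl
    rw [hIdef, ENNReal.mul_inv_cancel hI0 hIt]
  -- value of the candidate
  have hval : (∫⁻ z in annulus z0 r1 r2, ϱ0 z ^ p / ENNReal.ofReal (Q z) ∂volume)
      = ∫⁻ r in Set.Ioo r1 r2, (normQ Q p z0 r)⁻¹ ∂volume := by
    rw [polar_lintegral z0 hr1 hr12 (fun z => ϱ0 z ^ p / ENNReal.ofReal (Q z)) ((hϱ0m.pow_const _).div hQm.ennreal_ofReal)]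
    apply lintegral_congr_ae
    filter_upwards [hae] with r hr
    obtain ⟨hmem, hI0, hIt⟩ := hr
    have hr0 : (0:ℝ) < r := hr1.trans hmem.1
    have hIp0 : (circlePowInt Q (1/(p-1)) z0 r) ^ p ≠ 0 := by
      simp only [ne_eq, ENNReal.rpow_eq_zero_iff, not_or]
      exact ⟨fun h => hI0 h.1, fun h => absurd h.2 (not_lt.mpr hp0.le)⟩
    have hpt : ∀ θ : ℝ,
        (fun z => ϱ0 z ^ p / ENNReal.ofReal (Q z))
            (z0 + (r : ℂ) * Complex.exp ((θ : ℂ) * Complex.I)) * ENNReal.ofReal r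
          = (ENNReal.ofReal (Q (z0 + (r : ℂ) * Complex.exp ((θ : ℂ) * Complex.I))) ^ (1/(p-1))
              * ENNReal.ofReal r) * ((circlePowInt Q (1/(p-1)) z0 r) ^ p)⁻¹ := by
      intro θ
      set a := ENNReal.ofReal (Q (z0 + (r : ℂ) * Complex.exp ((θ : ℂ) * Complex.I))) with ha
      set I := circlePowInt Q (1/(p-1)) z0 r with hI
      simp only [hϱ0, habs r hr0 θ, ← ha, ← hI]
      rw [ENNReal.mul_rpow_of_nonneg _ _ hp0.le, ← ENNReal.rpow_mul, ENNReal.inv_rpow]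
      have hexp : (1/(p-1)) * p = (1/(p-1)) + 1 := by field_simp; ring
      rw [hexp, ENNReal.rpow_add _ _ (hQ0 _) (hQt _), ENNReal.rpow_one, div_eq_mul_inv]
      calc a ^ (1/(p-1)) * a * (I ^ p)⁻¹ * a⁻¹ * ENNReal.ofReal r
          = (a ^ (1/(p-1)) * ENNReal.ofReal r) * (I ^ p)⁻¹ * (a * a⁻¹) := by ring
        _ = (a ^ (1/(p-1)) * ENNReal.ofReal r) * (I ^ p)⁻¹ := by
            rw [ENNReal.mul_inv_cancel (hQ0 _) (hQt _), mul_one]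
    rw [lintegral_congr hpt,
      lintegral_mul_const' _ _ (ENNReal.inv_ne_top.mpr hIp0)]
    have hIdef : (∫⁻ θ in Set.Ioc (0 : ℝ) (2 * π),
        ENNReal.ofReal (Q (z0 + (r : ℂ) * Complex.exp ((θ : ℂ) * Complex.I))) ^ (1/(p-1))
          * ENNReal.ofReal r) = circlePowInt Q (1/(p-1)) z0 r := rfl
    rw [hIdef]
    have h1 : circlePowInt Q (1/(p-1)) z0 r * ((circlePowInt Q (1/(p-1)) z0 r) ^ p)⁻¹
        = (circlePowInt Q (1/(p-1)) z0 r) ^ (1 - p) := by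
      rw [ENNReal.rpow_sub 1 p hI0 hIt, ENNReal.rpow_one]
      exact (div_eq_mul_inv _ _).symm
    rw [h1, show (1:ℝ) - p = -(p-1) by ring, ENNReal.rpow_neg]
    rfl
  -- conclude by antisymmetry
  refine le_antisymm ?_ ?_
  · exact iInf_le_of_le ϱ0 (iInf_le_of_le hϱ0m (iInf_le_of_le hcon0 (le_of_eq hval)))
  · refine le_iInf fun ϱ => le_iInf fun hϱm => le_iInf fun hcon => ?_
    rw [polar_lintegral z0 hr1 hr12 (fun z => ϱ z ^ p / ENNReal.ofReal (Q z)) ((hϱm.pow_const _).div hQm.ennreal_ofReal)]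
    apply lintegral_mono_ae
    filter_upwards [hae, hcon] with r hr h1
    obtain ⟨hmem, hI0, hIt⟩ := hr
    have hr0 : (0:ℝ) < r := hr1.trans hmem.1
    set ν : Measure ℝ := ENNReal.ofReal r • volume.restrict (Set.Ioc (0:ℝ) (2*π)) with hν
    have hconv : ∀ h : ℝ → ℝ≥0∞, ∫⁻ θ, h θ ∂ν
        = ∫⁻ θ in Set.Ioc (0:ℝ) (2*π), h θ * ENNReal.ofReal r := by
      intro h
      rw [hν, lintegral_smul_measure, smul_eq_mul,
        lintegral_mul_const' _ _ ENNReal.ofReal_ne_top, mul_comm]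
    have hθmeas : Measurable (fun θ : ℝ =>
        z0 + (r:ℂ) * Complex.exp ((θ:ℂ) * Complex.I)) :=
      hγmeas.comp (measurable_const.prodMk measurable_id)
    have hBint : (∫⁻ θ, (fun θ : ℝ => ENNReal.ofReal
          (Q (z0 + (r:ℂ) * Complex.exp ((θ:ℂ) * Complex.I)))) θ ^ (1/(p-1)) ∂ν)
        = circlePowInt Q (1/(p-1)) z0 r := by
      rw [hconv]
      rfl
    have key := holder_lower ν p hp
      (fun θ : ℝ => ϱ (z0 + (r:ℂ) * Complex.exp ((θ:ℂ) * Complex.I)))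
      (fun θ : ℝ => ENNReal.ofReal (Q (z0 + (r:ℂ) * Complex.exp ((θ:ℂ) * Complex.I))))
      (hϱm.comp hθmeas).aemeasurable
      ((hQm.comp hθmeas).ennreal_ofReal).aemeasurable
      (fun θ => hQ0 _) (fun θ => hQt _)
      (by rw [hBint]; exact hI0) (by rw [hBint]; exact hIt)
      (by rw [hconv]; exact h1)
    rw [hBint, hconv] at key
    exact key
end

section
/- Let $p > 1$, $z_0 \in \mathbb{C}$, $0 < r_1 < r_2$, and let $Q : \mathbb{C} \to (0,\infty)$ be measurable such that for almost every $r \in (r_1,r_2)$ one has $0 < \|Q\|_{1/(p-1)}(z_0,r) < \infty$. Define on the annulus $R(z_0,r_1,r_2)$ the function $$\varrho_0(z) = \frac{Q(z)^{1/(p-1)}}{\int_0^{2\pi} Q(z_0 + |z-z_0| e^{i\theta})^{1/(p-1)}\, |z-z_0|\, d\theta}$$ (and $\varrho_0 = 0$ outside the annulus). Then for almost every $r \in (r_1,r_2)$ one has $\int_0^{2\pi} \varrho_0(z_0 + re^{i\theta})\, r\, d\theta = 1$, and $$\int_{R(z_0,r_1,r_2)} \frac{\varrho_0(z)^p}{Q(z)}\,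 dm(z) = \int_{r_1}^{r_2} \frac{dr}{\|Q\|_{1/(p-1)}(z_0,r)},$$ i.e. $\varrho_0$ attains the infimum of $\int_{R(z_0,r_1,r_2)} \varrho^p/Q\, dm$ over all measurable $\varrho \ge 0$ whose arclength integral over the circle $|z-z_0| = r$ is at least $1$ for a.e. $r \in (r_1,r_2)$. -/
open MeasureTheory ENNReal Real
open scoped Classical

theorem my_lintegral_polar (f : ℝ × ℝ → ℝ≥0∞) :
    (∫⁻ p in polarCoord.target, ENNReal.ofReal p.1 * f (polarCoord.symm p)) = ∫⁻ p, f p := by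
  set B : ℝ × ℝ → ℝ × ℝ →L[ℝ] ℝ × ℝ := fun p =>
    LinearMap.toContinuousLinearMap (Matrix.toLin (Module.Basis.finTwoProd ℝ) (Module.Basis.finTwoProd ℝ)
      !![Real.cos p.2, -p.1 * Real.sin p.2; Real.sin p.2, p.1 * Real.cos p.2])
  have A : ∀ p ∈ polarCoord.target,
      HasFDerivWithinAt polarCoord.symm (B p) polarCoord.target p :=
    fun p _ => (hasFDerivAt_polarCoord_symm p).hasFDerivWithinAt
  have B_det : ∀ p, (B p).det = p.1 := by
    intro p
    conv_rhs => rw [← one_mul p.1, ← cos_sq_add_sin_sq p.2]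
    simp only [B, neg_mul, LinearMap.det_toContinuousLinearMap, LinearMap.det_toLin,
      Matrix.det_fin_two_of, sub_neg_eq_add]
    ring
  symm
  calc
    ∫⁻ p, f p = ∫⁻ p in polarCoord.source, f p := by
      rw [← setLIntegral_univ]
      exact setLIntegral_congr polarCoord_source_ae_eq_univ.symm
    _ = ∫⁻ p in polarCoord.symm '' polarCoord.target, f p := by
      rw [polarCoord.symm_image_target_eq_source]
    _ = ∫⁻ p in polarCoord.target, ENNReal.ofReal |(B p).det| * f (polarCoord.symm p) :=
      lintegral_image_eq_lintegral_abs_det_fderiv_mul volume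
        polarCoord.open_target.measurableSet A polarCoord.symm.injOn f
    _ = ∫⁻ p in polarCoord.target, ENNReal.ofReal p.1 * f (polarCoord.symm p) := by
      refine setLIntegral_congr_fun polarCoord.open_target.measurableSet
        (fun x hx => ?_)
      rw [B_det, abs_of_pos hx.1]

theorem my_lintegral_polar_complex (f : ℂ → ℝ≥0∞) :
    (∫⁻ p in polarCoord.target, ENNReal.ofReal p.1 * f (Complex.polarCoord.symm p))
      = ∫⁻ z, f z := by
  rw [← (Complex.volume_preserving_equiv_real_prod.symm).lintegral_comp_emb
    Complex.measurableEquivRealProd.symm.measurableEmbedding, ← my_lintegral_polar]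
  rfl

theorem my_periodic_shift (g : ℝ → ℝ≥0∞) (hper : ∀ x, g (x + 2*π) = g x) :
    ∫⁻ x in Set.Ioo (-π) π, g x = ∫⁻ x in Set.Ioc 0 (2*π), g x := by
  have h1 : ∫⁻ x in Set.Ioo (-π) π, g x = ∫⁻ x in Set.Ioc (-π) π, g x :=
    setLIntegral_congr Ioo_ae_eq_Ioc
  have h2 : ∫⁻ x in Set.Ioc (-π) 0, g x = ∫⁻ x in Set.Ioc π (2*π), g x := by
    have h := (measurePreserving_add_right volume (2*π)).setLIntegral_comp_emb
      (MeasurableEquiv.addRight (2*π)).measurableEmbedding g (Set.Ioc (-π) 0)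
    simp only [hper] at h
    rw [h, Set.image_add_const_Ioc]
    norm_num
    congr 1
    ring_nf
  have hsplit1 : Set.Ioc (-π) 0 ∪ Set.Ioc 0 π = Set.Ioc (-π) π :=
    Set.Ioc_union_Ioc_eq_Ioc (by linarith [pi_pos]) pi_nonneg
  have hsplit2 : Set.Ioc 0 π ∪ Set.Ioc π (2*π) = Set.Ioc 0 (2*π) :=
    Set.Ioc_union_Ioc_eq_Ioc pi_nonneg (by linarith [pi_pos])
  rw [h1, ← hsplit1, ← hsplit2,
    lintegral_union measurableSet_Ioc (Set.Ioc_disjoint_Ioc_of_le le_rfl),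
    lintegral_union measurableSet_Ioc (Set.Ioc_disjoint_Ioc_of_le le_rfl), h2, add_comm]

theorem circlePowInt_measurable (Q : ℂ → ℝ) (hQm : Measurable Q) (e : ℝ) (z0 : ℂ) :
    Measurable (circlePowInt Q e z0) := by
  unfold circlePowInt
  have : Measurable (Function.uncurry fun (r : ℝ) (θ : ℝ) =>
      ENNReal.ofReal (Q (z0 + (r : ℂ) * Complex.exp ((θ : ℂ) * Complex.I))) ^ e
        * ENNReal.ofReal r) := by
    apply Measurable.mul
    · apply Measurable.pow_const
      apply Measurable.ennreal_ofReal
      apply hQm.comp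
      fun_prop
    · exact measurable_ofReal.comp measurable_fst
  exact this.lintegral_prod_right'

/-- The extremal function
`ϱ₀(z) = Q(z)^{1/(p-1)} / ∫_{C(z₀,|z-z₀|)} Q^{1/(p-1)} |dz|` on the annulus
(and `0` outside) has arclength integral `1` over the circle `|z-z₀| = r` for a.e.
`r ∈ (r₁,r₂)` and attains the value `∫_{r₁}^{r₂} dr/‖Q‖_{1/(p-1)}(z₀,r)` for
`∫_{R(z₀,r₁,r₂)} ϱ₀^p/Q dm`, i.e. it attains the infimum over all admissible `ϱ`. -/
theorem stmt5 (p : ℝ) (hp : 1 < p) (z0 : ℂ) (r1 r2 : ℝ) (hr1 : 0 < r1) (hr12 : r1 < r2)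
    (Q : ℂ → ℝ) (hQm : Measurable Q) (hQpos : ∀ z, 0 < Q z)
    (hQn : ∀ᵐ (r : ℝ) ∂(volume.restrict (Set.Ioo r1 r2)),
      0 < normQ Q p z0 r ∧ normQ Q p z0 r < ⊤)
    (ϱ0 : ℂ → ℝ≥0∞)
    (hϱ0 : ϱ0 = fun z => if z ∈ annulus z0 r1 r2 then
        ENNReal.ofReal (Q z) ^ (1 / (p - 1))
          / circlePowInt Q (1 / (p - 1)) z0 ‖z - z0‖
      else 0) :
    (∀ᵐ (r : ℝ) ∂(volume.restrict (Set.Ioo r1 r2)),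
        ∫⁻ θ in Set.Ioc (0 : ℝ) (2 * π),
          ϱ0 (z0 + (r : ℂ) * Complex.exp ((θ : ℂ) * Complex.I))
            * ENNReal.ofReal r = 1) ∧
      ∫⁻ z in annulus z0 r1 r2, ϱ0 z ^ p / ENNReal.ofReal (Q z) ∂volume
        = ∫⁻ r in Set.Ioo r1 r2, (normQ Q p z0 r)⁻¹ ∂volume := by
  have hp1 : (0:ℝ) < p - 1 := by linarith
  set e : ℝ := 1 / (p - 1) with he
  set C : ℝ → ℝ≥0∞ := circlePowInt Q e z0 with hC
  -- basic facts about points on circles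
  have habs : ∀ (r θ : ℝ), 0 < r →
      ‖(z0 + (r : ℂ) * Complex.exp ((θ : ℂ) * Complex.I)) - z0‖ = r := by
    intro r θ hr
    rw [add_sub_cancel_left, norm_mul, Complex.norm_real, Complex.norm_exp_ofReal_mul_I,
      mul_one, Real.norm_eq_abs, abs_of_pos hr]
  have hmem : ∀ (r θ : ℝ), r1 < r → r < r2 →
      (z0 + (r : ℂ) * Complex.exp ((θ : ℂ) * Complex.I)) ∈ annulus z0 r1 r2 := by
    intro r θ h1 h2
    constructor <;> rw [habs r θ (hr1.trans h1)] <;> assumption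
  -- C nonzero / finite from hQn
  have hCfacts : ∀ r : ℝ, 0 < normQ Q p z0 r → normQ Q p z0 r < ⊤ → C r ≠ 0 ∧ C r ≠ ⊤ := by
    intro r h0 ht
    constructor
    · intro h
      rw [normQ, ← he, ← hC, h, ENNReal.zero_rpow_of_pos hp1] at h0
      exact lt_irrefl 0 h0
    · intro h
      rw [normQ, ← he, ← hC, h, ENNReal.top_rpow_of_pos hp1] at ht
      exact lt_irrefl ⊤ ht
  -- pointwise value of ϱ0 on the circle of radius r
  have hϱ0val : ∀ (r θ : ℝ), r1 < r → r < r2 →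
      ϱ0 (z0 + (r : ℂ) * Complex.exp ((θ : ℂ) * Complex.I))
        = ENNReal.ofReal (Q (z0 + (r : ℂ) * Complex.exp ((θ : ℂ) * Complex.I))) ^ e / C r := by
    intro r θ h1 h2
    rw [hϱ0]
    simp only [hmem r θ h1 h2, if_true, habs r θ (hr1.trans h1), ← he, ← hC]
  -- Part 1
  have part1 : ∀ᵐ (r : ℝ) ∂(volume.restrict (Set.Ioo r1 r2)),
      ∫⁻ θ in Set.Ioc (0 : ℝ) (2 * π),
        ϱ0 (z0 + (r : ℂ) * Complex.exp ((θ : ℂ) * Complex.I)) * ENNReal.ofReal r = 1 := by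
    filter_upwards [hQn, ae_restrict_mem measurableSet_Ioo] with r hn hr
    obtain ⟨hC0, hCt⟩ := hCfacts r hn.1 hn.2
    calc
      ∫⁻ θ in Set.Ioc (0 : ℝ) (2 * π),
          ϱ0 (z0 + (r : ℂ) * Complex.exp ((θ : ℂ) * Complex.I)) * ENNReal.ofReal r
        = ∫⁻ θ in Set.Ioc (0 : ℝ) (2 * π),
            (ENNReal.ofReal (Q (z0 + (r : ℂ) * Complex.exp ((θ : ℂ) * Complex.I))) ^ e
              * ENNReal.ofReal r) * (C r)⁻¹ := by
          refine setLIntegral_congr_fun measurableSet_Ioc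
            (fun θ _ => ?_)
          rw [hϱ0val r θ hr.1 hr.2, div_eq_mul_inv, mul_right_comm]
      _ = C r * (C r)⁻¹ := by
          rw [lintegral_mul_const' _ _ (ENNReal.inv_ne_top.mpr hC0)]
          rfl
      _ = 1 := ENNReal.mul_inv_cancel hC0 hCt
  refine ⟨part1, ?_⟩
  -- Part 2
  set G : ℂ → ℝ≥0∞ := fun z => ϱ0 z ^ p / ENNReal.ofReal (Q z) with hG
  have hA : MeasurableSet (annulus z0 r1 r2) := by
    have : annulus z0 r1 r2 = (fun z => ‖z - z0‖) ⁻¹' Set.Ioo r1 r2 := rfl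
    rw [this]
    exact (continuous_norm.comp (continuous_id.sub continuous_const)).measurable
      measurableSet_Ioo
  have hCm : Measurable C := circlePowInt_measurable Q hQm e z0
  have hϱ0m : Measurable ϱ0 := by
    rw [hϱ0]
    refine Measurable.ite hA ?_ measurable_const
    apply Measurable.div
    · exact (hQm.ennreal_ofReal).pow_const _
    · exact hCm.comp
        ((continuous_norm.comp (continuous_id.sub continuous_const)).measurable)
  have hGm : Measurable G := (hϱ0m.pow_const _).div (hQm.ennreal_ofReal)
  set H : ℂ → ℝ≥0∞ := (annulus z0 r1 r2).indicator G with hH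
  have hHm : Measurable H := hGm.indicator hA
  have hep : e * p = e + 1 := by
    rw [he]
    field_simp
    ring
  have hexp_eq : ∀ q : ℝ × ℝ,
      ((q.1 : ℂ) * Complex.exp ((q.2 : ℂ) * Complex.I)) = Complex.polarCoord.symm q := by
    intro q
    rw [Complex.polarCoord_symm_apply, Complex.exp_mul_I, Complex.ofReal_cos,
      Complex.ofReal_sin]
  -- pointwise value of the part-2 integrand on the circle of radius r
  have hpoint : ∀ (r : ℝ), ∀ z : ℂ, z ∈ annulus z0 r1 r2 → ‖z - z0‖ = r →
      ENNReal.ofReal r * H z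
        = (ENNReal.ofReal (Q z) ^ e * ENNReal.ofReal r) * ((C r) ^ p)⁻¹ := by
    intro r z hzmem hzabs
    have ha0 : ENNReal.ofReal (Q z) ≠ 0 := by
      simp [ENNReal.ofReal_eq_zero, not_le, hQpos z]
    have hat : ENNReal.ofReal (Q z) ≠ ⊤ := ENNReal.ofReal_ne_top
    have hϱ : ϱ0 z = ENNReal.ofReal (Q z) ^ e / C r := by
      rw [hϱ0]
      simp only [hzmem, if_true, hzabs, ← he, ← hC]
    have hHz : H z = G z := Set.indicator_of_mem hzmem G
    rw [hHz]
    simp only [hG]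
    rw [hϱ, ENNReal.div_rpow_of_nonneg _ _ (by linarith : (0:ℝ) ≤ p), ← ENNReal.rpow_mul,
      hep, ENNReal.rpow_add e 1 ha0 hat, ENNReal.rpow_one, div_eq_mul_inv, div_eq_mul_inv]
    calc ENNReal.ofReal r
          * (ENNReal.ofReal (Q z) ^ e * ENNReal.ofReal (Q z) * ((C r) ^ p)⁻¹
              * (ENNReal.ofReal (Q z))⁻¹)
        = (ENNReal.ofReal (Q z) * (ENNReal.ofReal (Q z))⁻¹)
            * ((ENNReal.ofReal (Q z) ^ e * ENNReal.ofReal r) * ((C r) ^ p)⁻¹) := by ring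
      _ = (ENNReal.ofReal (Q z) ^ e * ENNReal.ofReal r) * ((C r) ^ p)⁻¹ := by
          rw [ENNReal.mul_inv_cancel ha0 hat, one_mul]
  -- the circle-integral computation for good r
  have hcircle : ∀ r : ℝ, r1 < r → r < r2 → C r ≠ 0 → C r ≠ ⊤ →
      ∫⁻ θ in Set.Ioc (0 : ℝ) (2 * π),
        ENNReal.ofReal r * H (z0 + (r : ℂ) * Complex.exp ((θ : ℂ) * Complex.I))
        = (normQ Q p z0 r)⁻¹ := by
    intro r h1 h2 hC0 hCt
    have hCp0 : (C r) ^ p ≠ 0 := by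
      simp [ENNReal.rpow_eq_zero_iff, hC0, hCt, (by linarith : ¬ p < 0), (by linarith : (0:ℝ) < p)]
    calc
      ∫⁻ θ in Set.Ioc (0 : ℝ) (2 * π),
          ENNReal.ofReal r * H (z0 + (r : ℂ) * Complex.exp ((θ : ℂ) * Complex.I))
        = ∫⁻ θ in Set.Ioc (0 : ℝ) (2 * π),
            (ENNReal.ofReal (Q (z0 + (r : ℂ) * Complex.exp ((θ : ℂ) * Complex.I))) ^ e
              * ENNReal.ofReal r) * ((C r) ^ p)⁻¹ := by
          refine setLIntegral_congr_fun measurableSet_Ioc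
            (fun θ _ => ?_)
          exact hpoint r _ (hmem r θ h1 h2) (habs r θ (hr1.trans h1))
      _ = C r * ((C r) ^ p)⁻¹ := by
          rw [lintegral_mul_const' _ _ (ENNReal.inv_ne_top.mpr hCp0)]
          rfl
      _ = (normQ Q p z0 r)⁻¹ := by
          have hnq : normQ Q p z0 r = C r ^ (p - 1) := rfl
          rw [hnq, ← ENNReal.rpow_neg, ← ENNReal.rpow_neg, (show -(p-1) = 1 + -p by ring),
            ENNReal.rpow_add 1 (-p) hC0 hCt, ENNReal.rpow_one]
  -- assemble part 2 via polar coordinates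
  set K : ℝ × ℝ → ℝ≥0∞ :=
    fun q => ENNReal.ofReal q.1 * H (z0 + (q.1 : ℂ) * Complex.exp ((q.2 : ℂ) * Complex.I))
    with hK
  have hKm : Measurable K := by
    apply Measurable.mul
    · exact measurable_ofReal.comp measurable_fst
    · apply hHm.comp
      fun_prop
  have hKper : ∀ (r θ : ℝ), K (r, θ + 2*π) = K (r, θ) := by
    intro r θ
    have : ((θ + 2*π : ℝ) : ℂ) * Complex.I = (θ : ℂ) * Complex.I + 2 * π * Complex.I := by
      push_cast; ring
    simp only [hK, this, Complex.exp_add, Complex.exp_two_pi_mul_I, mul_one]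
  set J : ℝ → ℝ≥0∞ := fun r => ∫⁻ θ in Set.Ioc (0:ℝ) (2*π), K (r, θ) with hJ
  have hJ0 : ∀ r : ℝ, 0 < r → r ∉ Set.Ioo r1 r2 → J r = 0 := by
    intro r hr hrn
    have : ∀ θ : ℝ, K (r, θ) = 0 := by
      intro θ
      have hnot : (z0 + (r : ℂ) * Complex.exp ((θ : ℂ) * Complex.I)) ∉ annulus z0 r1 r2 := by
        intro hc
        obtain ⟨hc1, hc2⟩ := hc
        rw [habs r θ hr] at hc1 hc2
        exact hrn ⟨hc1, hc2⟩
      simp only [hK, hH, Set.indicator_of_notMem hnot, mul_zero]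
    simp only [hJ, this, lintegral_zero]
  calc
    ∫⁻ z in annulus z0 r1 r2, ϱ0 z ^ p / ENNReal.ofReal (Q z) ∂volume
      = ∫⁻ z, H z := (lintegral_indicator hA G).symm
    _ = ∫⁻ z, H (z0 + z) := by
        exact ((measurePreserving_add_left volume z0).lintegral_comp_emb
          (MeasurableEquiv.addLeft z0).measurableEmbedding H).symm
    _ = ∫⁻ q in polarCoord.target, ENNReal.ofReal q.1 * H (z0 + Complex.polarCoord.symm q) :=
        (my_lintegral_polar_complex _).symm
    _ = ∫⁻ q in Set.Ioi (0:ℝ) ×ˢ Set.Ioo (-π) π, K q := by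
        rw [polarCoord_target]
        refine setLIntegral_congr_fun (measurableSet_Ioi.prod measurableSet_Ioo)
          (fun q _ => ?_)
        rw [hK]
        simp only [hexp_eq q]
    _ = ∫⁻ r in Set.Ioi (0:ℝ), ∫⁻ θ in Set.Ioo (-π) π, K (r, θ) := by
        rw [Measure.volume_eq_prod, ← Measure.prod_restrict, lintegral_prod _ hKm.aemeasurable]
    _ = ∫⁻ r in Set.Ioi (0:ℝ), J r := by
        refine setLIntegral_congr_fun measurableSet_Ioi
          (fun r _ => ?_)
        exact my_periodic_shift (fun θ => K (r, θ)) (hKper r)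
    _ = ∫⁻ r in Set.Ioi (0:ℝ), (Set.Ioo r1 r2).indicator J r := by
        refine setLIntegral_congr_fun measurableSet_Ioi
          (fun r hr => ?_)
        by_cases hmem' : r ∈ Set.Ioo r1 r2
        · rw [Set.indicator_of_mem hmem']
        · rw [Set.indicator_of_notMem hmem', hJ0 r hr hmem']
    _ = ∫⁻ r in Set.Ioo r1 r2, J r := by
        have hsub : Set.Ioo r1 r2 ∩ Set.Ioi (0:ℝ) = Set.Ioo r1 r2 :=
          Set.inter_eq_left.mpr (fun x hx => hr1.trans hx.1)
        rw [lintegral_indicator measurableSet_Ioo, Measure.restrict_restrict measurableSet_Ioo,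
          hsub]
    _ = ∫⁻ r in Set.Ioo r1 r2, (normQ Q p z0 r)⁻¹ := by
        apply lintegral_congr_ae
        filter_upwards [hQn, ae_restrict_mem measurableSet_Ioo] with r hn hr
        obtain ⟨hC0, hCt⟩ := hCfacts r hn.1 hn.2
        exact hcircle r hr.1 hr.2 hC0 hCt
end

section
/- Let $p > 1$, $z_0 \in \mathbb{C}$, $0 < r_1 < r_2$, and let $Q : \mathbb{C} \to (0,\infty)$ be measurable. Set $I = \int_{r_1}^{r_2} \frac{dr}{\|Q\|_{1/(p-1)}(z_0,r)}$ and assume $0 < I < \infty$. Then for every measurable function $\eta : (r_1,r_2) \to [0,\infty]$ with $\int_{r_1}^{r_2} \eta(r)\, dr = 1$ one has $$\int_{R(z_0,r_1,r_2)} Q(z)^{1/(p-1)}\, \eta(|z-z_0|)^{p/(p-1)}\, dm(z) \;\ge\; I^{-1/(p-1)}.$$ -/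
open MeasureTheory ENNReal Real

/-! ### Auxiliary lemmas -/

/-- Lower integral of a periodic function over any period interval is the same. -/
lemma lintegral_Ioc_of_periodic (F : ℝ → ℝ≥0∞) {T : ℝ} (hT : 0 < T)
    (hF : Function.Periodic F T) (a b : ℝ) :
    ∫⁻ x in Set.Ioc a (a + T), F x = ∫⁻ x in Set.Ioc b (b + T), F x := by
  haveI : Fact (0 < T) := ⟨hT⟩
  have h : ∀ c : ℝ, ∫⁻ x in Set.Ioc c (c + T), F x = ∫⁻ y : AddCircle T, hF.lift y := by
    intro c
    rw [← AddCircle.lintegral_preimage T c hF.lift]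
    refine setLIntegral_congr_fun measurableSet_Ioc
      (fun x _ => ?_)
    exact (hF.lift_coe x).symm
  rw [h a, h b]

lemma inner_circle_eq (Q : ℂ → ℝ) (e : ℝ) (z0 : ℂ) (r : ℝ) :
    ∫⁻ θ in Set.Ioo (-π) π,
        ENNReal.ofReal (Q (z0 + (r : ℂ) * Complex.exp ((θ : ℂ) * Complex.I))) ^ e
          * ENNReal.ofReal r
      = circlePowInt Q e z0 r := by
  have hπ : (0 : ℝ) < π := Real.pi_pos
  set F : ℝ → ℝ≥0∞ := fun θ =>
    ENNReal.ofReal (Q (z0 + (r : ℂ) * Complex.exp ((θ : ℂ) * Complex.I))) ^ e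
      * ENNReal.ofReal r with hFdef
  have hper : Function.Periodic F (2 * π) := by
    intro θ
    have h1 : ((θ + 2 * π : ℝ) : ℂ) * Complex.I
        = (θ : ℂ) * Complex.I + 2 * π * Complex.I := by
      push_cast; ring
    simp only [hFdef, h1, Complex.exp_add, Complex.exp_two_pi_mul_I, mul_one]
  calc ∫⁻ θ in Set.Ioo (-π) π, F θ
      = ∫⁻ θ in Set.Ioc (-π) (-π + 2 * π), F θ := by
        refine setLIntegral_congr ?_
        rw [show -π + 2 * π = π by ring]
        exact Ioo_ae_eq_Ioc
    _ = ∫⁻ θ in Set.Ioc 0 (0 + 2 * π), F θ :=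
        lintegral_Ioc_of_periodic F (by positivity) hper _ _
    _ = circlePowInt Q e z0 r := by rw [zero_add]; rfl

lemma complex_polar_eq (a θ : ℝ) :
    (Complex.mk (a * Real.cos θ) (a * Real.sin θ))
      = (a : ℂ) * Complex.exp ((θ : ℂ) * Complex.I) := by
  rw [Complex.exp_mul_I]
  apply Complex.ext <;>
    simp [Complex.cos_ofReal_re, Complex.sin_ofReal_re, Complex.mul_re, Complex.mul_im,
      Complex.cos_ofReal_im, Complex.sin_ofReal_im]

/-- Polar-coordinate change of variables for the annulus, for lower integrals. -/
lemma annulus_polar (z0 : ℂ) (r1 r2 : ℝ) (hr1 : 0 < r1)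
    (G : ℂ → ℝ≥0∞) (hG : Measurable G) :
    ∫⁻ z in annulus z0 r1 r2, G (z - z0)
      = ∫⁻ r in Set.Ioo r1 r2, ∫⁻ θ in Set.Ioo (-π) π,
          G ((r : ℂ) * Complex.exp ((θ : ℂ) * Complex.I)) * ENNReal.ofReal r := by
  -- Step 1 : translate
  have step1 : ∫⁻ z in annulus z0 r1 r2, G (z - z0)
      = ∫⁻ w in annulus 0 r1 r2, G w := by
    have hmp : MeasurePreserving (fun w : ℂ => w + z0) volume volume :=
      measurePreserving_add_right volume z0
    have hemb : MeasurableEmbedding (fun w : ℂ => w + z0) :=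
      (MeasurableEquiv.addRight z0).measurableEmbedding
    have := hmp.setLIntegral_comp_preimage_emb hemb
      (fun z => G (z - z0)) (annulus z0 r1 r2)
    rw [← this]
    have hpre : (fun w : ℂ => w + z0) ⁻¹' annulus z0 r1 r2 = annulus 0 r1 r2 := by
      ext w
      simp [annulus, add_sub_cancel_right]
    rw [hpre]
    refine setLIntegral_congr_fun (by
      have : MeasurableSet (annulus (0 : ℂ) r1 r2) := by
        apply MeasurableSet.inter
        · exact measurableSet_lt measurable_const (continuous_norm.measurable.comp
            (measurable_id.sub_const 0))
        · exact measurableSet_lt (continuous_norm.measurable.comp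
            (measurable_id.sub_const 0)) measurable_const
      exact this) (fun w _ => by simp)
  -- Step 2 : move to ℝ × ℝ
  set A : Set (ℝ × ℝ) :=
    {x : ℝ × ℝ | r1 < Real.sqrt (x.1 ^ 2 + x.2 ^ 2) ∧ Real.sqrt (x.1 ^ 2 + x.2 ^ 2) < r2}
    with hAdef
  have step2 : ∫⁻ w in annulus 0 r1 r2, G w
      = ∫⁻ x in A, G (Complex.measurableEquivRealProd.symm x) := by
    have hmp : MeasurePreserving (Complex.measurableEquivRealProd.symm) volume volume :=
      Complex.volume_preserving_equiv_real_prod.symm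
    have h0 := hmp.setLIntegral_comp_preimage_emb
      Complex.measurableEquivRealProd.symm.measurableEmbedding G (annulus 0 r1 r2)
    have hpre : (⇑Complex.measurableEquivRealProd.symm) ⁻¹' annulus 0 r1 r2 = A := by
      ext x
      simp only [Set.mem_preimage, annulus, Set.mem_setOf_eq,
        Complex.measurableEquivRealProd_symm_apply, sub_zero, hAdef,
        Complex.norm_def, Complex.normSq_mk]
      rw [show x.1 * x.1 + x.2 * x.2 = x.1 ^ 2 + x.2 ^ 2 by ring]
    rw [← h0, hpre]
  -- Step 3 : A agrees a.e. with the polar image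
  set s : Set (ℝ × ℝ) := Set.Ioo r1 r2 ×ˢ Set.Ioo (-π) π with hsdef
  have hs_sub : s ⊆ polarCoord.target := by
    rintro ⟨r, θ⟩ ⟨hr, hθ⟩
    exact ⟨lt_trans hr1 hr.1, hθ⟩
  have himage : polarCoord.symm '' s = A ∩ polarCoord.source := by
    ext x
    constructor
    · rintro ⟨p, hp, rfl⟩
      have hps : p ∈ polarCoord.target := hs_sub hp
      have hp1 : 0 < p.1 := lt_trans hr1 hp.1.1
      have hnorm : Real.sqrt ((p.1 * Real.cos p.2) ^ 2 + (p.1 * Real.sin p.2) ^ 2) = p.1 := by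
        rw [show (p.1 * Real.cos p.2) ^ 2 + (p.1 * Real.sin p.2) ^ 2
            = p.1 ^ 2 * (Real.cos p.2 ^ 2 + Real.sin p.2 ^ 2) by ring,
          Real.cos_sq_add_sin_sq, mul_one, Real.sqrt_sq hp1.le]
      refine ⟨?_, polarCoord.map_target hps⟩
      simp only [hAdef, Set.mem_setOf_eq, polarCoord_symm_apply]
      rw [hnorm]
      exact ⟨hp.1.1, hp.1.2⟩
    · rintro ⟨hxA, hxs⟩
      refine ⟨polarCoord x, ?_, polarCoord.left_inv hxs⟩
      have hxt : polarCoord x ∈ polarCoord.target := polarCoord.map_source hxs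
      refine ⟨?_, hxt.2⟩
      simp only [polarCoord_apply]
      exact ⟨hxA.1, hxA.2⟩
  have hAae : A =ᵐ[volume] polarCoord.symm '' s := by
    rw [himage]
    have h1 : (A ∩ polarCoord.source : Set (ℝ × ℝ)) =ᵐ[volume] (A ∩ Set.univ : Set (ℝ × ℝ)) :=
      MeasureTheory.ae_eq_set_inter (MeasureTheory.ae_eq_refl _) polarCoord_source_ae_eq_univ
    rw [Set.inter_univ] at h1
    exact h1.symm
  -- Step 4 : Jacobian change of variables
  set B : ℝ × ℝ → ℝ × ℝ →L[ℝ] ℝ × ℝ := fun p =>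
    LinearMap.toContinuousLinearMap (Matrix.toLin (Module.Basis.finTwoProd ℝ) (Module.Basis.finTwoProd ℝ)
      !![Real.cos p.2, -p.1 * Real.sin p.2; Real.sin p.2, p.1 * Real.cos p.2]) with hBdef
  have B_det : ∀ p, (B p).det = p.1 := by
    intro p
    conv_rhs => rw [← one_mul p.1, ← Real.cos_sq_add_sin_sq p.2]
    simp only [hBdef, neg_mul, LinearMap.det_toContinuousLinearMap, LinearMap.det_toLin,
      Matrix.det_fin_two_of, sub_neg_eq_add]
    ring
  have hs_meas : MeasurableSet s := measurableSet_Ioo.prod measurableSet_Ioo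
  have hder : ∀ p ∈ s, HasFDerivWithinAt polarCoord.symm (B p) s p := fun p _ =>
    (hasFDerivAt_polarCoord_symm p).hasFDerivWithinAt
  have hinj : Set.InjOn polarCoord.symm s := polarCoord.symm.injOn.mono hs_sub
  have step4 : ∫⁻ x in polarCoord.symm '' s, G (Complex.measurableEquivRealProd.symm x)
      = ∫⁻ p in s, ENNReal.ofReal |(B p).det|
          * G (Complex.measurableEquivRealProd.symm (polarCoord.symm p)) :=
    lintegral_image_eq_lintegral_abs_det_fderiv_mul volume hs_meas hder hinj _
  -- Step 5 : rewrite the integrand on s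
  have step5 : ∫⁻ p in s, ENNReal.ofReal |(B p).det|
          * G (Complex.measurableEquivRealProd.symm (polarCoord.symm p))
      = ∫⁻ p in s, G ((p.1 : ℂ) * Complex.exp ((p.2 : ℂ) * Complex.I))
          * ENNReal.ofReal p.1 := by
    refine setLIntegral_congr_fun hs_meas (fun p hp => ?_)
    have hp1 : 0 < p.1 := lt_trans hr1 hp.1.1
    rw [B_det, abs_of_pos hp1, mul_comm]
    congr 2
    simp only [polarCoord_symm_apply, Complex.measurableEquivRealProd_symm_apply]
    exact complex_polar_eq p.1 p.2
  -- Step 6 : Fubini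
  have step6 : ∫⁻ p in s, G ((p.1 : ℂ) * Complex.exp ((p.2 : ℂ) * Complex.I))
          * ENNReal.ofReal p.1
      = ∫⁻ r in Set.Ioo r1 r2, ∫⁻ θ in Set.Ioo (-π) π,
          G ((r : ℂ) * Complex.exp ((θ : ℂ) * Complex.I)) * ENNReal.ofReal r := by
    have hmeas : Measurable fun p : ℝ × ℝ =>
        G ((p.1 : ℂ) * Complex.exp ((p.2 : ℂ) * Complex.I)) * ENNReal.ofReal p.1 := by
      have hcont : Continuous fun p : ℝ × ℝ =>
          (p.1 : ℂ) * Complex.exp ((p.2 : ℂ) * Complex.I) :=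
        (Complex.continuous_ofReal.comp continuous_fst).mul
          (Complex.continuous_exp.comp
            ((Complex.continuous_ofReal.comp continuous_snd).mul continuous_const))
      exact (hG.comp hcont.measurable).mul
        (ENNReal.measurable_ofReal.comp measurable_fst)
    rw [hsdef, Measure.volume_eq_prod, ← Measure.prod_restrict,
      lintegral_prod _ hmeas.aemeasurable]
  rw [step1, step2, setLIntegral_congr hAae, step4, step5, step6]

/-- Positivity of the circle integral for positive `Q` and positive radius. -/
lemma circlePowInt_pos (Q : ℂ → ℝ) (hQpos : ∀ z, 0 < Q z) (e : ℝ) (z0 : ℂ) {r : ℝ}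
    (hr : 0 < r) (hm : Measurable fun θ : ℝ =>
      ENNReal.ofReal (Q (z0 + (r : ℂ) * Complex.exp ((θ : ℂ) * Complex.I))) ^ e
        * ENNReal.ofReal r) :
    0 < circlePowInt Q e z0 r := by
  rw [circlePowInt, lintegral_pos_iff_support hm]
  have hsupp : Function.support (fun θ : ℝ =>
      ENNReal.ofReal (Q (z0 + (r : ℂ) * Complex.exp ((θ : ℂ) * Complex.I))) ^ e
        * ENNReal.ofReal r) = Set.univ := by
    ext θ
    simp only [Function.mem_support, Set.mem_univ, iff_true]
    intro h
    rcases mul_eq_zero.1 h with h1 | h1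
    · have h2 : (0 : ℝ≥0∞) < ENNReal.ofReal (Q (z0 + (r : ℂ)
          * Complex.exp ((θ : ℂ) * Complex.I))) ^ e :=
        ENNReal.rpow_pos (ENNReal.ofReal_pos.2 (hQpos _)) ENNReal.ofReal_ne_top
      exact h2.ne' h1
    · exact (ENNReal.ofReal_pos.2 hr).ne' h1
  rw [hsupp, Measure.restrict_apply MeasurableSet.univ, Set.univ_inter,
    Real.volume_Ioc]
  have : (0 : ℝ) < 2 * π := by positivity
  simp [ENNReal.ofReal_pos, this, Real.pi_pos]

/-- With `I = ∫_{r₁}^{r₂} dr/‖Q‖_{1/(p-1)}(z₀,r) ∈ (0,∞)`, every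
measurable `η : (r₁,r₂) → [0,∞]` with `∫_{r₁}^{r₂} η(r) dr = 1` satisfies
`∫_{R(z₀,r₁,r₂)} Q^{1/(p-1)}(z) η(|z-z₀|)^{p/(p-1)} dm(z) ≥ I^{-1/(p-1)}`. -/
theorem stmt7 (p : ℝ) (hp : 1 < p) (z0 : ℂ) (r1 r2 : ℝ) (hr1 : 0 < r1) (hr12 : r1 < r2)
    (Q : ℂ → ℝ) (hQm : Measurable Q) (hQpos : ∀ z, 0 < Q z)
    (I : ℝ≥0∞) (hI : I = ∫⁻ r in Set.Ioo r1 r2, (normQ Q p z0 r)⁻¹ ∂volume)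
    (hIpos : 0 < I) (hIfin : I ≠ ⊤)
    (η : ℝ → ℝ≥0∞) (hηm : Measurable η)
    (hη1 : ∫⁻ r in Set.Ioo r1 r2, η r ∂volume = 1) :
    I ^ (-1 / (p - 1)) ≤
      ∫⁻ z in annulus z0 r1 r2,
        ENNReal.ofReal (Q z) ^ (1 / (p - 1))
          * η (‖z - z0‖) ^ (p / (p - 1)) ∂volume := by
  have hp1 : (0 : ℝ) < p - 1 := by linarith
  have hp0 : (0 : ℝ) < p := by linarith
  set e : ℝ := 1 / (p - 1) with he
  set q : ℝ := p / (p - 1) with hq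
  have he_pos : 0 < e := by positivity
  have hq_pos : 0 < q := by positivity
  -- the circle integral as a function of r
  set c : ℝ → ℝ≥0∞ := fun r => circlePowInt Q e z0 r with hcdef
  -- basic measurability facts
  have hΦcont : Continuous fun x : ℝ × ℝ =>
      z0 + (x.1 : ℂ) * Complex.exp ((x.2 : ℂ) * Complex.I) :=
    continuous_const.add ((Complex.continuous_ofReal.comp continuous_fst).mul
      (Complex.continuous_exp.comp
        ((Complex.continuous_ofReal.comp continuous_snd).mul continuous_const)))
  have hFmeas : Measurable fun x : ℝ × ℝ =>
      ENNReal.ofReal (Q (z0 + (x.1 : ℂ) * Complex.exp ((x.2 : ℂ) * Complex.I))) ^ e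
        * ENNReal.ofReal x.1 :=
    ((ENNReal.measurable_ofReal.comp (hQm.comp hΦcont.measurable)).pow_const e).mul
      (ENNReal.measurable_ofReal.comp measurable_fst)
  have hc : Measurable c := by
    have := hFmeas.lintegral_prod_right' (ν := volume.restrict (Set.Ioc (0 : ℝ) (2 * π)))
    exact this
  have hc_pos : ∀ r ∈ Set.Ioo r1 r2, 0 < c r := by
    intro r hr
    refine circlePowInt_pos Q hQpos e z0 (lt_trans hr1 hr.1) ?_
    have hcont : Continuous fun θ : ℝ =>
        z0 + (r : ℂ) * Complex.exp ((θ : ℂ) * Complex.I) :=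
      continuous_const.add (continuous_const.mul
        (Complex.continuous_exp.comp (Complex.continuous_ofReal.mul continuous_const)))
    exact ((ENNReal.measurable_ofReal.comp (hQm.comp hcont.measurable)).pow_const e).mul
      measurable_const
  -- the key identity: the annulus integral equals ∫ η^q · c
  set J : ℝ≥0∞ := ∫⁻ r in Set.Ioo r1 r2, η r ^ q * c r with hJdef
  have hGmeas : Measurable fun w : ℂ =>
      ENNReal.ofReal (Q (z0 + w)) ^ e * η (‖w‖) ^ q :=
    ((ENNReal.measurable_ofReal.comp (hQm.comp (measurable_id.const_add z0))).pow_const e).mul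
      ((hηm.comp continuous_norm.measurable).pow_const q)
  have key : (∫⁻ z in annulus z0 r1 r2,
        ENNReal.ofReal (Q z) ^ e * η (‖z - z0‖) ^ q ∂volume) = J := by
    have h1 : (∫⁻ z in annulus z0 r1 r2,
          ENNReal.ofReal (Q z) ^ e * η (‖z - z0‖) ^ q ∂volume)
        = ∫⁻ z in annulus z0 r1 r2,
            (fun w => ENNReal.ofReal (Q (z0 + w)) ^ e * η (‖w‖) ^ q) (z - z0)
              ∂volume := by
      apply lintegral_congr
      intro z
      simp [add_sub_cancel]
    rw [h1, annulus_polar z0 r1 r2 hr1 _ hGmeas, hJdef]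
    refine setLIntegral_congr_fun measurableSet_Ioo
      (fun r hr => ?_)
    have hrpos : 0 < r := lt_trans hr1 hr.1
    have habs : ∀ θ : ℝ, ‖(r : ℂ) * Complex.exp ((θ : ℂ) * Complex.I)‖ = r := by
      intro θ
      rw [norm_mul, Complex.norm_real, Complex.norm_exp_ofReal_mul_I, mul_one,
        Real.norm_of_nonneg hrpos.le]
    have h2 : ∀ θ : ℝ,
        (ENNReal.ofReal (Q (z0 + (r : ℂ) * Complex.exp ((θ : ℂ) * Complex.I))) ^ e
            * η (‖(r : ℂ) * Complex.exp ((θ : ℂ) * Complex.I)‖) ^ q)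
            * ENNReal.ofReal r
          = η r ^ q * (ENNReal.ofReal (Q (z0 + (r : ℂ)
              * Complex.exp ((θ : ℂ) * Complex.I))) ^ e * ENNReal.ofReal r) := by
      intro θ
      rw [habs θ]
      ring
    simp only [h2]
    rw [lintegral_const_mul]
    · rw [inner_circle_eq]
    · have hcont : Continuous fun θ : ℝ =>
          z0 + (r : ℂ) * Complex.exp ((θ : ℂ) * Complex.I) :=
        continuous_const.add (continuous_const.mul
          (Complex.continuous_exp.comp (Complex.continuous_ofReal.mul continuous_const)))
      exact ((ENNReal.measurable_ofReal.comp (hQm.comp hcont.measurable)).pow_const e).mul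
        measurable_const
  -- rewrite the goal
  rw [key]
  -- the set where c is infinite
  set S : Set ℝ := Set.Ioo r1 r2 ∩ c ⁻¹' {⊤} with hSdef
  have hS_meas : MeasurableSet S :=
    measurableSet_Ioo.inter (hc (measurableSet_singleton ⊤))
  by_cases hcase : ∫⁻ r in S, η r ∂volume = 0
  · -- main case: Hölder's inequality
    have hae_zero : η =ᵐ[volume.restrict S] 0 := (lintegral_eq_zero_iff hηm).1 hcase
    -- translate to a.e. on volume
    have hae_zero' : ∀ᵐ r ∂volume, r ∈ S → η r = 0 := by
      have h0 := (ae_restrict_iff' hS_meas).1 hae_zero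
      filter_upwards [h0] with r hr hrS
      simpa using hr hrS
    set a : ℝ := (p - 1) / p with ha
    have ha_pos : 0 < a := by positivity
    set f : ℝ → ℝ≥0∞ := fun r => η r * c r ^ a with hfdef
    set g : ℝ → ℝ≥0∞ := fun r => c r ^ (-a) with hgdef
    have hf : Measurable f := hηm.mul (hc.pow_const a)
    have hg : Measurable g := hc.pow_const (-a)
    have hpq : q.HolderConjugate p := by
      rw [Real.holderConjugate_iff]
      constructor
      · rw [hq]
        rw [lt_div_iff₀ hp1]
        linarith
      · rw [hq]
        rw [inv_div]
        field_simp
        ring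
    have holder := ENNReal.lintegral_mul_le_Lp_mul_Lq (volume.restrict (Set.Ioo r1 r2))
      hpq hf.aemeasurable hg.aemeasurable
    -- ∫ f^q = J
    have hfq : (∫⁻ r in Set.Ioo r1 r2, f r ^ q ∂volume) = J := by
      rw [hJdef]
      apply lintegral_congr
      intro r
      rw [hfdef]
      simp only []
      rw [ENNReal.mul_rpow_of_nonneg _ _ hq_pos.le, ← ENNReal.rpow_mul]
      congr 2
      rw [ha, hq]
      field_simp
      exact ENNReal.rpow_one _
    -- ∫ g^p = I
    have hgp : (∫⁻ r in Set.Ioo r1 r2, g r ^ p ∂volume) = I := by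
      rw [hI]
      apply lintegral_congr
      intro r
      rw [hgdef]
      simp only []
      rw [← ENNReal.rpow_mul]
      have hap : -a * p = -(p - 1) := by
        rw [ha]; field_simp
      rw [hap, ENNReal.rpow_neg]
      rfl
    -- 1 ≤ ∫ f·g
    have hone : (1 : ℝ≥0∞) ≤ ∫⁻ r in Set.Ioo r1 r2, (f * g) r ∂volume := by
      rw [← hη1]
      refine lintegral_mono_ae ?_
      rw [ae_restrict_iff' measurableSet_Ioo]
      filter_upwards [hae_zero'] with r hr hrIoo
      by_cases hctop : c r = ⊤
      · have : r ∈ S := ⟨hrIoo, hctop⟩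
        rw [hr this]
        exact zero_le
      · have hc0 : c r ≠ 0 := (hc_pos r hrIoo).ne'
        have : (f * g) r = η r * (c r ^ a * c r ^ (-a)) := by
          simp only [Pi.mul_apply, hfdef, hgdef]
          ring
        rw [this, ← ENNReal.rpow_add a (-a) hc0 hctop]
        simp
    have h2 : (1 : ℝ≥0∞) ≤ J ^ (1 / q) * I ^ (1 / p) := by
      calc (1 : ℝ≥0∞) ≤ ∫⁻ r in Set.Ioo r1 r2, (f * g) r ∂volume := hone
        _ ≤ (∫⁻ r in Set.Ioo r1 r2, f r ^ q ∂volume) ^ (1 / q)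
            * (∫⁻ r in Set.Ioo r1 r2, g r ^ p ∂volume) ^ (1 / p) := holder
        _ = J ^ (1 / q) * I ^ (1 / p) := by rw [hfq, hgp]
    -- conclude
    have hI0 : I ≠ 0 := hIpos.ne'
    have h3 : I ^ (-(1 / p)) ≤ J ^ (1 / q) := by
      calc I ^ (-(1 / p)) = I ^ (-(1 / p)) * 1 := (mul_one _).symm
        _ ≤ I ^ (-(1 / p)) * (J ^ (1 / q) * I ^ (1 / p)) := by
            exact mul_le_mul_right h2 _
        _ = J ^ (1 / q) * (I ^ (-(1 / p)) * I ^ (1 / p)) := by ring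
        _ = J ^ (1 / q) * I ^ (-(1 / p) + 1 / p) := by
            rw [← ENNReal.rpow_add _ _ hI0 hIfin]
        _ = J ^ (1 / q) := by simp
    have h4 := ENNReal.rpow_le_rpow h3 hq_pos.le
    rw [← ENNReal.rpow_mul, ← ENNReal.rpow_mul] at h4
    have hq1 : 1 / q * q = 1 := by field_simp
    have hqp : -(1 / p) * q = -1 / (p - 1) := by
      rw [hq]; field_simp
    rw [hq1, hqp, ENNReal.rpow_one] at h4
    exact h4
  · -- degenerate case: J = ⊤
    have hJtop : J = ⊤ := by
      set T : Set ℝ := S ∩ Function.support η with hTdef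
      have hT_meas : MeasurableSet T := hS_meas.inter (measurableSet_support hηm)
      have hT_pos : 0 < volume T := by
        by_contra h
        push_neg at h
        have hT0 : volume T = 0 := le_antisymm h zero_le
        apply hcase
        apply (lintegral_eq_zero_iff hηm).2
        have hz : ∀ᵐ r ∂(volume.restrict S), η r = 0 := by
          rw [ae_restrict_iff' hS_meas, ae_iff]
          have hsub : {r | ¬(r ∈ S → η r = 0)} ⊆ T := by
            intro r hr
            simp only [Set.mem_setOf_eq] at hr
            push_neg at hr
            exact ⟨hr.1, hr.2⟩
          exact measure_mono_null hsub hT0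
        exact hz
      have hTsub : T ⊆ Set.Ioo r1 r2 := fun r hr => hr.1.1
      have h5 : (∫⁻ r in T, η r ^ q * c r ∂volume) = ⊤ := by
        have h6 : ∀ r ∈ T, η r ^ q * c r = ⊤ := by
          intro r hr
          have hctop : c r = ⊤ := hr.1.2
          have hη0 : η r ≠ 0 := hr.2
          have hηq : η r ^ q ≠ 0 := by
            rw [Ne, ENNReal.rpow_eq_zero_iff]
            rintro (⟨h, -⟩ | ⟨-, h⟩)
            · exact hη0 h
            · exact not_lt.2 hq_pos.le h
          rw [hctop, ENNReal.mul_top hηq]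
        calc (∫⁻ r in T, η r ^ q * c r ∂volume)
            = ∫⁻ _ in T, ⊤ ∂volume :=
              setLIntegral_congr_fun hT_meas
                (fun r hr => h6 r hr)
          _ = ⊤ * volume T := setLIntegral_const T ⊤
          _ = ⊤ := ENNReal.top_mul hT_pos.ne'
      have h7 : (∫⁻ r in T, η r ^ q * c r ∂volume) ≤ J :=
        lintegral_mono_set hTsub
      rw [h5] at h7
      exact top_le_iff.1 h7
    rw [hJtop]
    exact le_top
end

section
/- Let $f : \mathbb{C} \to \mathbb{C}$ be a homeomorphism of $\mathbb{C}$ onto $\mathbb{C}$ with $f(0) = 0$, and let $\mathcal{R} : (0,1) \to (0,\infty)$ be a function such that for every $r \in (0,1)$, $$m\big(f(B_r)\big) \le \pi\, \mathcal{R}(r)^2,$$ where $B_r = \{z \in \mathbb{C} : |z| < r\}$ and $m$ is two-dimensional Lebesgue measure on $\mathbb{C}$. Then $$\liminf_{z \to 0} \frac{|f(z)|}{\mathcal{R}(|z|)} \le 1.$$ -/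
open MeasureTheory Filter Real

/-- Let `f : ℂ → ℂ` be a homeomorphism of `ℂ` onto `ℂ` with `f(0) = 0`,
and let `R : (0,1) → (0,∞)` satisfy `m(f(B_r)) ≤ π R(r)²` for all `r ∈ (0,1)`,
where `B_r` is the open disk of radius `r` about the origin and `m` is the
two-dimensional Lebesgue measure on `ℂ`. Then `liminf_{z → 0} |f(z)|/R(|z|) ≤ 1`. -/
theorem stmt8 (f : ℂ → ℂ) (hf : IsHomeomorph f) (hf0 : f 0 = 0)
    (R : ℝ → ℝ) (hRpos : ∀ r ∈ Set.Ioo (0 : ℝ) 1, 0 < R r)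
    (hbound : ∀ r ∈ Set.Ioo (0 : ℝ) 1,
      volume (f '' Metric.ball (0 : ℂ) r) ≤ ENNReal.ofReal (π * R r ^ 2)) :
    Filter.liminf (fun z : ℂ => ‖f z‖ / R ‖z‖)
      (nhdsWithin 0 {(0 : ℂ)}ᶜ) ≤ 1 := by
  set g := fun z : ℂ => ‖f z‖ / R ‖z‖ with hg
  by_contra hcon
  push_neg at hcon
  set L := Filter.liminf g (nhdsWithin 0 {(0 : ℂ)}ᶜ) with hL
  -- basic eventual facts
  have hsmall : ∀ᶠ z : ℂ in nhdsWithin 0 {(0 : ℂ)}ᶜ, ‖z‖ ∈ Set.Ioo (0 : ℝ) 1 := by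
    filter_upwards [self_mem_nhdsWithin,
      mem_nhdsWithin_of_mem_nhds (Metric.ball_mem_nhds (0 : ℂ) one_pos)] with z hz hz1
    refine ⟨by simpa using hz, by simpa [Complex.norm_def] using hz1⟩
  have hbdd : Filter.IsBoundedUnder (· ≥ ·) (nhdsWithin 0 {(0 : ℂ)}ᶜ) g := by
    refine ⟨0, Filter.eventually_map.2 ?_⟩
    filter_upwards [hsmall] with z hz
    exact div_nonneg (norm_nonneg _) (hRpos _ hz).le
  set a : ℝ := (1 + L) / 2 with ha
  have ha1 : 1 < a := by simp only [ha]; linarith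
  have haL : a < L := by simp only [ha]; linarith
  have hev : ∀ᶠ z : ℂ in nhdsWithin 0 {(0 : ℂ)}ᶜ,
      a < g z ∧ ‖z‖ ∈ Set.Ioo (0 : ℝ) 1 :=
    (Filter.eventually_lt_of_lt_liminf haL hbdd).and hsmall
  rw [Filter.eventually_iff, Metric.mem_nhdsWithin_iff] at hev
  obtain ⟨ε, hε, hsub⟩ := hev
  set r : ℝ := min ε 1 / 2 with hr
  have hr0 : 0 < r := by positivity
  have hrε : r < ε := by
    have := min_le_left ε 1; simp only [hr]; linarith
  have hr1 : r < 1 := by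
    have := min_le_right ε 1; simp only [hr]; linarith
  have hrIoo : r ∈ Set.Ioo (0 : ℝ) 1 := ⟨hr0, hr1⟩
  have hRr : 0 < R r := hRpos r hrIoo
  -- key pointwise bound on the sphere of radius r
  have hkey : ∀ z : ℂ, ‖z‖ = r → a * R r < ‖f z‖ := by
    intro z hz
    have hz0 : z ≠ 0 := by
      intro h0; rw [h0] at hz; simp at hz; linarith
    have hmem : z ∈ Metric.ball (0 : ℂ) ε ∩ {(0 : ℂ)}ᶜ := by
      constructor
      · simpa [hz] using hrε
      · simpa using hz0
    have hlt : a < ‖f z‖ / R r := by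
      have h := (hsub hmem).1
      rw [hg] at h
      simpa [hz] using h
    calc a * R r < (‖f z‖ / R r) * R r := by
          exact mul_lt_mul_of_pos_right hlt hRr
      _ = ‖f z‖ := by field_simp
  -- f is a homeomorphism; image of ball is open, frontier is image of sphere
  obtain ⟨e, he⟩ := isHomeomorph_iff_exists_homeomorph.1 hf
  have hopen : IsOpen (f '' Metric.ball (0 : ℂ) r) :=
    hf.isOpenMap _ Metric.isOpen_ball
  have hfront : frontier (f '' Metric.ball (0 : ℂ) r) = f '' Metric.sphere (0 : ℂ) r := by
    rw [← he, ← Homeomorph.image_frontier, frontier_ball (0 : ℂ) hr0.ne']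
  -- the ball of radius a * R r is contained in the image
  have hsubset : Metric.ball (0 : ℂ) (a * R r) ⊆ f '' Metric.ball (0 : ℂ) r := by
    have hpre : IsPreconnected (Metric.ball (0 : ℂ) (a * R r)) :=
      (convex_ball (0 : ℂ) (a * R r)).isPreconnected
    refine hpre.subset_of_closure_inter_subset hopen ?_ ?_
    · refine ⟨0, ?_, ⟨0, by simpa [Complex.norm_def] using hr0, hf0⟩⟩
      simp only [Metric.mem_ball, dist_zero_right, norm_zero]
      positivity
    · intro w hw
      rcases hw with ⟨hwc, hwb⟩
      rw [closure_eq_self_union_frontier] at hwc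
      rcases hwc with hwc | hwc
      · exact hwc
      · exfalso
        rw [hfront] at hwc
        obtain ⟨z, hz, rfl⟩ := hwc
        have h1 : a * R r < ‖f z‖ :=
          hkey z (by simpa [Complex.norm_def] using hz)
        have h2 : ‖f z‖ < a * R r := by
          simpa [Complex.norm_def] using hwb
        linarith
  -- volume comparison
  have hvol : ENNReal.ofReal (π * (a * R r) ^ 2) ≤ ENNReal.ofReal (π * R r ^ 2) := by
    calc ENNReal.ofReal (π * (a * R r) ^ 2)
        = volume (Metric.ball (0 : ℂ) (a * R r)) := by
          rw [Complex.volume_ball, ← ENNReal.ofReal_pow (by positivity),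
            ← ENNReal.ofReal_coe_nnreal, ← ENNReal.ofReal_mul (by positivity)]
          rw [NNReal.coe_real_pi]
          ring_nf
      _ ≤ volume (f '' Metric.ball (0 : ℂ) r) := measure_mono hsubset
      _ ≤ ENNReal.ofReal (π * R r ^ 2) := hbound r hrIoo
  rw [ENNReal.ofReal_le_ofReal_iff (by positivity)] at hvol
  have hπ : (0 : ℝ) < π := Real.pi_pos
  have h1 : (a * R r) ^ 2 ≤ R r ^ 2 := (mul_le_mul_iff_right₀ hπ).mp hvol
  have h2 : R r ^ 2 < (a * R r) ^ 2 := by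
    have h3 : R r < a * R r := (lt_mul_iff_one_lt_left hRr).2 ha1
    exact pow_lt_pow_left₀ h3 hRr.le (by norm_num)
  linarith
end

section
/- Let $p > 2$, let $Q : \mathbb{C} \to (0,\infty)$ be measurable, let $\mathbb{B} = \{z \in \mathbb{C} : |z| < 1\}$, and let $f : \mathbb{B} \to \mathbb{B}$ be a homeomorphism of $\mathbb{B}$ onto $\mathbb{B}$ with $f(0) = 0$. Suppose that for every $r \in (0,1)$ $$m\big(f(B_r)\big) \le \pi \Big( 1 + (2\pi)^{p-1}(p-2) \int_r^1 \frac{dt}{\|Q\|_{1/(p-1)}(0,t)} \Big)^{\frac{2}{2-p}},$$ where $B_r = \{z \in \mathbb{C} : |z| < r\}$. Then $$\liminf_{z \to 0} |f(z)| \cdot \Big( 1 + (2\pi)^{p-1}(p-2) \int_{|z|}^1 \frac{dt}{\|Q\|_{1/(p-1)}(0,t)} \Big)^{\frac{1}{p-2}} \le 1.$$ -/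
open MeasureTheory ENNReal Real Filter

/-- Let `p > 2`, `Q : ℂ → (0,∞)` measurable, and let `f` be a
homeomorphism of the unit disk `𝔹` onto itself with `f(0) = 0` (encoded by a
homeomorphism `F` of the subtype with which `f` agrees on `𝔹`). If for every
`r ∈ (0,1)` one has
`m(f(B_r)) ≤ π (1 + (2π)^{p-1}(p-2) ∫_r^1 dt/‖Q‖_{1/(p-1)}(0,t))^{2/(2-p)}`,
then `liminf_{z→0} |f(z)| (1 + (2π)^{p-1}(p-2) ∫_{|z|}^1 dt/‖Q‖_{1/(p-1)}(0,t))^{1/(p-2)} ≤ 1`. -/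
theorem stmt12 (p : ℝ) (hp : 2 < p)
    (Q : ℂ → ℝ) (hQm : Measurable Q) (hQpos : ∀ z, 0 < Q z)
    (f : ℂ → ℂ) (F : Metric.ball (0 : ℂ) 1 ≃ₜ Metric.ball (0 : ℂ) 1)
    (hfF : ∀ z : Metric.ball (0 : ℂ) 1, f z = (F z : ℂ))
    (hf0 : f 0 = 0)
    (hbound : ∀ r ∈ Set.Ioo (0 : ℝ) 1,
      volume (f '' Metric.ball (0 : ℂ) r)
        ≤ ENNReal.ofReal π
          * (1 + ENNReal.ofReal ((2 * π) ^ (p - 1) * (p - 2))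
              * ∫⁻ t in Set.Ioo r 1, (normQ Q p 0 t)⁻¹ ∂volume) ^ (2 / (2 - p))) :
    Filter.liminf
      (fun z : ℂ => ENNReal.ofReal ‖f z‖
        * (1 + ENNReal.ofReal ((2 * π) ^ (p - 1) * (p - 2))
            * ∫⁻ t in Set.Ioo ‖z‖ 1, (normQ Q p 0 t)⁻¹ ∂volume)
          ^ (1 / (p - 2)))
      (nhdsWithin 0 {(0 : ℂ)}ᶜ) ≤ 1 := by
  by_contra hcon
  rw [not_le] at hcon
  -- basic facts about f
  have hfmem : ∀ z ∈ Metric.ball (0 : ℂ) 1, f z ∈ Metric.ball (0 : ℂ) 1 := fun z hz => by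
    rw [hfF ⟨z, hz⟩]; exact (F ⟨z, hz⟩).2
  have hinj : ∀ z₁ ∈ Metric.ball (0 : ℂ) 1, ∀ z₂ ∈ Metric.ball (0 : ℂ) 1,
      f z₁ = f z₂ → z₁ = z₂ := by
    intro z₁ h₁ z₂ h₂ he
    rw [hfF ⟨z₁, h₁⟩, hfF ⟨z₂, h₂⟩] at he
    have := F.injective (Subtype.ext he)
    exact congrArg Subtype.val this
  have hsurj : ∀ w ∈ Metric.ball (0 : ℂ) 1, ∃ z ∈ Metric.ball (0 : ℂ) 1, f z = w := by
    intro w hw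
    refine ⟨(F.symm ⟨w, hw⟩ : ℂ), (F.symm ⟨w, hw⟩).2, ?_⟩
    rw [hfF (F.symm ⟨w, hw⟩), F.apply_symm_apply]
  have hopen : ∀ s : Set ℂ, IsOpen s → s ⊆ Metric.ball (0 : ℂ) 1 → IsOpen (f '' s) := by
    intro s hs hsub
    have heq : f '' s
        = Subtype.val '' (F '' (Subtype.val ⁻¹' s : Set (Metric.ball (0 : ℂ) 1))) := by
      ext w
      constructor
      · rintro ⟨z, hzs, rfl⟩
        exact ⟨F ⟨z, hsub hzs⟩, ⟨⟨z, hsub hzs⟩, hzs, rfl⟩, (hfF _).symm⟩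
      · rintro ⟨x, ⟨y, hy, rfl⟩, rfl⟩
        exact ⟨y, hy, (hfF y).symm ▸ rfl⟩
    rw [heq]
    exact Metric.isOpen_ball.isOpenMap_subtype_val _
      (F.isOpenMap _ (hs.preimage continuous_subtype_val))
  -- pick c and eventual bound
  obtain ⟨c, hc1, hc2⟩ := exists_between hcon
  have hev := Filter.eventually_lt_of_lt_liminf hc2
  obtain ⟨ε, hε, hball⟩ := Metric.mem_nhdsWithin_iff.1 hev
  set r : ℝ := min ε 1 / 2 with hrdef
  have hr0 : 0 < r := by positivity
  have hr1 : r < 1 := by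
    have : min ε 1 ≤ 1 := min_le_right _ _
    simp only [hrdef]; linarith
  have hrε : r < ε := by
    have : min ε 1 ≤ ε := min_le_left _ _
    simp only [hrdef]; linarith
  set A : ℝ≥0∞ := 1 + ENNReal.ofReal ((2 * π) ^ (p - 1) * (p - 2))
      * ∫⁻ t in Set.Ioo r 1, (normQ Q p 0 t)⁻¹ ∂volume with hAdef
  have hA1 : (1 : ℝ≥0∞) ≤ A := le_self_add
  have hp2 : (0 : ℝ) < p - 2 := by linarith
  have hcirc : ∀ z : ℂ, ‖z‖ = r →
      c < ENNReal.ofReal ‖f z‖ * A ^ (1 / (p - 2)) := by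
    intro z hz
    have hz0 : z ≠ 0 := by
      intro h
      rw [h, norm_zero] at hz
      exact hr0.ne hz
    have hmem : z ∈ Metric.ball (0 : ℂ) ε ∩ {(0 : ℂ)}ᶜ := by
      constructor
      · simp [Metric.mem_ball, Complex.dist_eq, hz, hrε]
      · exact hz0
    have := hball hmem
    simpa [hz, hAdef] using this
  have hb := hbound r ⟨hr0, hr1⟩
  rw [← hAdef] at hb
  have hballsub : Metric.ball (0 : ℂ) r ⊆ Metric.ball (0 : ℂ) 1 :=
    Metric.ball_subset_ball hr1.le
  have hopenu : IsOpen (f '' Metric.ball (0 : ℂ) r) :=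
    hopen _ Metric.isOpen_ball hballsub
  have hne : (f '' Metric.ball (0 : ℂ) r).Nonempty :=
    ⟨0, 0, Metric.mem_ball_self hr0, hf0⟩
  by_cases hAtop : A = ⊤
  · -- top case: RHS is 0, but image is open nonempty
    rw [hAtop, ENNReal.top_rpow_of_neg (by
      apply div_neg_of_pos_of_neg <;> linarith), mul_zero] at hb
    exact (hopenu.measure_pos volume hne).ne' (le_antisymm hb (zero_le))
  · set B : ℝ≥0∞ := A ^ (1 / (p - 2)) with hBdef
    have hB1 : (1 : ℝ≥0∞) ≤ B := by
      rw [hBdef]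
      calc (1 : ℝ≥0∞) = 1 ^ (1 / (p - 2)) := (ENNReal.one_rpow _).symm
        _ ≤ A ^ (1 / (p - 2)) := ENNReal.rpow_le_rpow hA1 (by positivity)
    have hBtop : B ≠ ⊤ := ENNReal.rpow_ne_top_of_nonneg (by positivity) hAtop
    have hB0 : B ≠ 0 := by
      intro h; rw [h] at hB1; simp at hB1
    have hM : ∀ z : ℂ, ‖z‖ = r → c / B < ENNReal.ofReal ‖f z‖ := by
      intro z hz
      rw [ENNReal.div_lt_iff (Or.inl hB0) (Or.inl hBtop)]
      exact hcirc z hz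
    have hrmem : ((r : ℂ)) ∈ Metric.ball (0 : ℂ) 1 := by
      simp [Metric.mem_ball, Complex.dist_eq]
      rw [abs_of_pos hr0]; exact hr1
    have hM1 : c / B < 1 := by
      have h1 : ‖((r : ℝ) : ℂ)‖ = r := by
        rw [Complex.norm_real, Real.norm_eq_abs, abs_of_pos hr0]
      have h2 := hM _ h1
      have h3 : f ((r : ℝ) : ℂ) ∈ Metric.ball (0 : ℂ) 1 := hfmem _ hrmem
      have h4 : ‖f ((r : ℝ) : ℂ)‖ < 1 := by
        simpa [Metric.mem_ball, Complex.dist_eq] using h3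
      exact h2.trans_le (by
        calc ENNReal.ofReal (‖f ((r : ℝ) : ℂ)‖) ≤ ENNReal.ofReal 1 :=
          ENNReal.ofReal_le_ofReal h4.le
        _ = 1 := ENNReal.ofReal_one)
    have hBinv : B⁻¹ < c / B := by
      rw [div_eq_mul_inv]
      have := ENNReal.mul_lt_mul_right
        (ENNReal.inv_ne_zero.2 hBtop) (ENNReal.inv_ne_top.2 hB0) hc1
      simpa [mul_comm] using this
    obtain ⟨x, hx1, hx2⟩ := exists_between hBinv
    have hxtop : x ≠ ⊤ := (hx2.trans hM1).ne_top
    have hx0 : x ≠ 0 := by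
      have hBi : (0 : ℝ≥0∞) < B⁻¹ := ENNReal.inv_pos.2 hBtop
      exact (hBi.trans hx1).ne'
    set t : ℝ := x.toReal with htdef
    have ht0 : 0 < t := ENNReal.toReal_pos hx0 hxtop
    have hofx : ENNReal.ofReal t = x := ENNReal.ofReal_toReal hxtop
    have hxlt1 : x < 1 := hx2.trans hM1
    have ht1 : t < 1 := by
      have := (ENNReal.toReal_lt_toReal hxtop ENNReal.one_ne_top).2 hxlt1
      simpa using this
    -- connectedness argument
    have hsub2 : Metric.ball (0 : ℂ) t ⊆ f '' Metric.ball (0 : ℂ) r := by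
      apply IsPreconnected.subset_left_of_subset_union hopenu
        (hopen _ (Metric.isOpen_ball.sdiff Metric.isClosed_closedBall) Set.diff_subset)
      · -- disjoint
        rw [Set.disjoint_left]
        rintro w ⟨z₁, hz₁, rfl⟩ ⟨z₂, hz₂, he⟩
        have := hinj z₂ hz₂.1 z₁ (hballsub hz₁) he
        subst this
        exact hz₂.2 (Metric.closedBall_subset_closedBall le_rfl (Metric.ball_subset_closedBall hz₁))
      · -- covers
        intro w hw
        have hw1 : w ∈ Metric.ball (0 : ℂ) 1 := Metric.ball_subset_ball ht1.le hw
        obtain ⟨z, hz, rfl⟩ := hsurj w hw1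
        rcases lt_trichotomy ‖z‖ r with h | h | h
        · exact Or.inl ⟨z, by simpa [Metric.mem_ball, Complex.dist_eq] using h, rfl⟩
        · exfalso
          have h1 := hM z h
          have h2 : ‖f z‖ < t := by
            simpa [Metric.mem_ball, Complex.dist_eq] using hw
          have h3 : ENNReal.ofReal ‖f z‖ < x := by
            rw [← hofx]
            exact ENNReal.ofReal_lt_ofReal_iff ht0 |>.2 h2
          exact absurd (h1.trans h3) (not_lt.2 hx2.le)
        · refine Or.inr ⟨z, ⟨hz, ?_⟩, rfl⟩
          simp only [Metric.mem_closedBall, Complex.dist_eq, sub_zero, not_le]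
          exact h
      · exact ⟨0, Metric.mem_ball_self ht0, 0, Metric.mem_ball_self hr0, hf0⟩
      · exact (convex_ball (0 : ℂ) t).isPreconnected
    -- volume comparison
    have hvol : volume (Metric.ball (0 : ℂ) t) ≤ ENNReal.ofReal π * A ^ (2 / (2 - p)) :=
      (measure_mono hsub2).trans hb
    rw [Complex.volume_ball] at hvol
    have hpi : ENNReal.ofReal π = (NNReal.pi : ℝ≥0∞) := by
      rw [← NNReal.coe_real_pi, ENNReal.ofReal_coe_nnreal]
    have hArw : A ^ (2 / (2 - p)) = (B⁻¹) ^ 2 := by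
      have h2p : (2 : ℝ) - p ≠ 0 := by linarith
      have h2p' : p - 2 ≠ 0 := ne_of_gt hp2
      have h1 : (2 : ℝ) / (2 - p) = (1 / (p - 2)) * (-2) := by
        field_simp
        ring
      have h2 : (B : ℝ≥0∞) ^ (-(2 : ℝ)) = (B⁻¹) ^ 2 := by
        rw [ENNReal.rpow_neg, ← ENNReal.inv_pow]
        congr 1
        rw [show (2 : ℝ) = ((2 : ℕ) : ℝ) by norm_num, ENNReal.rpow_natCast]
      rw [h1, ENNReal.rpow_mul]
      exact h2
    rw [hArw, hpi, hofx] at hvol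
    have hpine : (NNReal.pi : ℝ≥0∞) ≠ 0 := by
      simp [NNReal.pi_ne_zero]
    have hpitop : (NNReal.pi : ℝ≥0∞) ≠ ⊤ := ENNReal.coe_ne_top
    have hvol2 : x ^ 2 ≤ (B⁻¹) ^ 2 := by
      have := (ENNReal.mul_le_mul_iff_left hpine hpitop).1 (by
        calc x ^ 2 * (NNReal.pi : ℝ≥0∞) ≤ (NNReal.pi : ℝ≥0∞) * (B⁻¹) ^ 2 := hvol
          _ = (B⁻¹) ^ 2 * (NNReal.pi : ℝ≥0∞) := mul_comm _ _)
      exact this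
    have : (B⁻¹) ^ 2 < x ^ 2 := (ENNReal.pow_lt_pow_left_iff two_ne_zero).2 hx1
    exact absurd hvol2 (not_le.2 this)
end

section
/- Let $Q : \mathbb{C} \to (0,\infty)$ be measurable, let $\mathbb{B} = \{z \in \mathbb{C} : |z| < 1\}$, and let $f : \mathbb{B} \to \mathbb{B}$ be a homeomorphism of $\mathbb{B}$ onto $\mathbb{B}$ with $f(0) = 0$. Suppose that for every $r \in (0,1)$ $$m\big(f(B_r)\big) \le \pi \exp\Big\{ -4\pi \int_r^1 \frac{dt}{\|Q\|_1(0,t)} \Big\},$$ where $B_r = \{z \in \mathbb{C} : |z| < r\}$ and $\|Q\|_1(0,t) = \int_0^{2\pi} Q(te^{i\theta})\, t\, d\theta$ is the arclength integral of $Q$ over the circle $|z| = t$. Then $$\liminf_{z \to 0} |f(z)| \cdot \exp\Big\{ 2\pi \int_{|z|}^1 \frac{dt}{\|Q\|_1(0,t)} \Big\} \le 1.$$ -/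
open MeasureTheory ENNReal Real Filter

/-- The exponential function extended to `[0,∞]`, with `expE ∞ = ∞`. -/
noncomputable def expE (x : ℝ≥0∞) : ℝ≥0∞ :=
  if x = ⊤ then ⊤ else ENNReal.ofReal (Real.exp x.toReal)

/-- arithmetic -/

lemma stmt13_arith (d : ℝ) (hd : 0 ≤ d) (A : ℝ≥0∞)
    (h : ENNReal.ofReal d ^ 2 * NNReal.pi ≤ ENNReal.ofReal π * (expE (2 * A))⁻¹) :
    ENNReal.ofReal d * expE A ≤ 1 := by
  have hpi : (NNReal.pi : ℝ≥0∞) = ENNReal.ofReal π := by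
    rw [← NNReal.coe_real_pi, ENNReal.ofReal_coe_nnreal]
  rw [hpi] at h
  rcases eq_or_ne A ⊤ with hA | hA
  · have h2 : (2 : ℝ≥0∞) * A = ⊤ := by simp [hA]
    rw [h2] at h
    rw [hA]
    simp only [expE, if_pos rfl, if_true, eq_self_iff_true, ENNReal.inv_top, mul_zero] at h
    have hd2 : ENNReal.ofReal d ^ 2 * ENNReal.ofReal π = 0 := le_antisymm h zero_le
    have : ENNReal.ofReal d = 0 := by
      rcases mul_eq_zero.1 hd2 with h' | h'
      · exact pow_eq_zero_iff (by norm_num) |>.1 h'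
      · exact absurd h' (by simp [ENNReal.ofReal_eq_zero, Real.pi_pos.not_ge, Real.pi_pos])
    simp [expE, this]
  · have h2 : (2 : ℝ≥0∞) * A ≠ ⊤ := by finiteness
    set a := A.toReal with ha
    have h2t : ((2 : ℝ≥0∞) * A).toReal = 2 * a := by
      rw [ENNReal.toReal_mul]; simp [ha]
    simp only [expE, if_neg hA, if_neg h2, h2t] at h ⊢
    have hexp : (ENNReal.ofReal (Real.exp (2 * a)))⁻¹ = ENNReal.ofReal (Real.exp (2 * a))⁻¹ := by
      rw [← ENNReal.ofReal_inv_of_pos (Real.exp_pos _)]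
    rw [hexp, ← ENNReal.ofReal_mul Real.pi_pos.le] at h
    have hsq : ENNReal.ofReal d ^ 2 = ENNReal.ofReal (d ^ 2) := by
      rw [ENNReal.ofReal_pow hd]
    rw [hsq, ← ENNReal.ofReal_mul (by positivity)] at h
    have hr : d ^ 2 * π ≤ π * (Real.exp (2 * a))⁻¹ :=
      (ENNReal.ofReal_le_ofReal_iff (by positivity)).1 h
    have he : Real.exp (2 * a) = Real.exp a * Real.exp a := by
      rw [← Real.exp_add]; ring_nf
    have hde : d * Real.exp a ≤ 1 := by
      have hepos := Real.exp_pos a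
      have h1 : d ^ 2 * (Real.exp a * Real.exp a) ≤ 1 := by
        rw [← he]
        have hπ := Real.pi_pos
        have he2 := Real.exp_pos (2 * a)
        have h3 := mul_le_mul_of_nonneg_right hr he2.le
        have h4 : π * (rexp (2 * a))⁻¹ * rexp (2 * a) = π := by field_simp
        rw [h4] at h3
        nlinarith [sq_nonneg d]
      nlinarith [mul_nonneg hd hepos.le]
    calc ENNReal.ofReal d * ENNReal.ofReal (Real.exp a)
        = ENNReal.ofReal (d * Real.exp a) := (ENNReal.ofReal_mul hd).symm
      _ ≤ 1 := by rw [← ENNReal.ofReal_one]; exact ENNReal.ofReal_le_ofReal hde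


/-- Let `Q : ℂ → (0,∞)` be measurable and let `f` be a homeomorphism of
the unit disk `𝔹` onto itself with `f(0) = 0` (encoded by a homeomorphism `F` of the
subtype with which `f` agrees on `𝔹`). If for every `r ∈ (0,1)` one has
`m(f(B_r)) ≤ π exp{-4π ∫_r^1 dt/‖Q‖₁(0,t)}` (the right-hand side written as
`π · (expE(4π ∫ …))⁻¹`, which is the correct value `0` when the integral is infinite),
then `liminf_{z→0} |f(z)| · exp{2π ∫_{|z|}^1 dt/‖Q‖₁(0,t)} ≤ 1`. -/
theorem stmt13 (Q : ℂ → ℝ) (hQm : Measurable Q) (hQpos : ∀ z, 0 < Q z)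
    (f : ℂ → ℂ) (F : Metric.ball (0 : ℂ) 1 ≃ₜ Metric.ball (0 : ℂ) 1)
    (hfF : ∀ z : Metric.ball (0 : ℂ) 1, f z = (F z : ℂ))
    (hf0 : f 0 = 0)
    (hbound : ∀ r ∈ Set.Ioo (0 : ℝ) 1,
      volume (f '' Metric.ball (0 : ℂ) r)
        ≤ ENNReal.ofReal π
          * (expE (ENNReal.ofReal (4 * π)
              * ∫⁻ t in Set.Ioo r 1, (circlePowInt Q 1 0 t)⁻¹ ∂volume))⁻¹) :
    Filter.liminf
      (fun z : ℂ => ENNReal.ofReal ‖f z‖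
        * expE (ENNReal.ofReal (2 * π)
            * ∫⁻ t in Set.Ioo ‖z‖ 1, (circlePowInt Q 1 0 t)⁻¹ ∂volume))
      (nhdsWithin 0 {(0 : ℂ)}ᶜ) ≤ 1 := by

  have hfc : ContinuousOn f (Metric.ball (0:ℂ) 1) := by
    rw [continuousOn_iff_continuous_restrict]
    have : (Metric.ball (0:ℂ) 1).domRestrict f = fun z => (F z : ℂ) := funext hfF
    rw [this]
    exact continuous_subtype_val.comp F.continuous
  have hinj : Set.InjOn f (Metric.ball (0:ℂ) 1) := by
    intro z hz w hw h
    rw [hfF ⟨z, hz⟩, hfF ⟨w, hw⟩] at h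
    have := F.injective (Subtype.ext h)
    exact congrArg Subtype.val this
  have hmaps : ∀ z ∈ Metric.ball (0:ℂ) 1, f z ∈ Metric.ball (0:ℂ) 1 := by
    intro z hz; rw [hfF ⟨z, hz⟩]; exact (F ⟨z, hz⟩).2
  have hsurj : ∀ w ∈ Metric.ball (0:ℂ) 1, ∃ z ∈ Metric.ball (0:ℂ) 1, f z = w := by
    intro w hw
    refine ⟨(F.symm ⟨w, hw⟩ : ℂ), (F.symm ⟨w, hw⟩).2, ?_⟩
    rw [hfF (F.symm ⟨w, hw⟩)]
    exact congrArg Subtype.val (F.apply_symm_apply ⟨w, hw⟩)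
  have himage : ∀ U : Set ℂ, IsOpen U → U ⊆ Metric.ball (0:ℂ) 1 → IsOpen (f '' U) := by
    intro U hU hU1
    have : f '' U = Subtype.val '' (F '' (Subtype.val ⁻¹' U : Set (Metric.ball (0:ℂ) 1))) := by
      ext w
      constructor
      · rintro ⟨z, hz, rfl⟩
        exact ⟨F ⟨z, hU1 hz⟩, ⟨⟨z, hU1 hz⟩, hz, rfl⟩, (hfF ⟨z, hU1 hz⟩).symm⟩
      · rintro ⟨p, ⟨q, hq, rfl⟩, rfl⟩
        exact ⟨q, hq, hfF q⟩
    rw [this]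
    exact Metric.isOpen_ball.isOpenMap_subtype_val _
      (F.isOpenMap _ (hU.preimage continuous_subtype_val))
  have key : ∀ r ∈ Set.Ioo (0:ℝ) 1, ∃ z : ℂ, ‖z‖ = r ∧
      ENNReal.ofReal ‖f z‖
        * expE (ENNReal.ofReal (2 * π)
            * ∫⁻ t in Set.Ioo ‖z‖ 1, (circlePowInt Q 1 0 t)⁻¹ ∂volume) ≤ 1 := by
    intro r hr
    obtain ⟨hr0, hr1⟩ := hr
    have hsub : Metric.sphere (0:ℂ) r ⊆ Metric.ball 0 1 := by
      intro z hz
      rw [Metric.mem_sphere] at hz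
      rw [Metric.mem_ball, hz]; exact hr1
    obtain ⟨z₀, hz₀s, hz₀min⟩ := (isCompact_sphere (0:ℂ) r).exists_isMinOn
      (NormedSpace.sphere_nonempty.mpr hr0.le)
      (continuous_norm.comp_continuousOn (hfc.mono hsub))
    set d := ‖f z₀‖ with hdd
    have hz₀abs : ‖z₀‖ = r := by
      simpa [Complex.dist_eq] using hz₀s
    have hz₀b : z₀ ∈ Metric.ball (0:ℂ) 1 := hsub hz₀s
    have hd1 : d < 1 := by
      simpa [Complex.dist_eq] using Metric.mem_ball.1 (hmaps z₀ hz₀b)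
    have hballsub : Metric.ball (0:ℂ) d ⊆ f '' Metric.ball 0 r := by
      rcases le_or_gt d 0 with hd0 | hd0
      · simp [Metric.ball_eq_empty.2 hd0]
      set s₁ := Metric.ball (0:ℂ) r with hs₁
      set s₃ := Metric.ball (0:ℂ) 1 \ Metric.closedBall 0 r with hs₃
      have h1o := himage s₁ Metric.isOpen_ball (Metric.ball_subset_ball hr1.le)
      have h3o := himage s₃ (Metric.isOpen_ball.sdiff Metric.isClosed_closedBall)
        Set.diff_subset
      have hdisj : Disjoint (f '' s₁) (f '' s₃) := by
        rw [Set.disjoint_iff_inter_eq_empty,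
          ← hinj.image_inter (Metric.ball_subset_ball hr1.le) Set.diff_subset]
        have h13 : s₁ ∩ s₃ = ∅ := by
          ext z
          simp only [Set.mem_inter_iff, Set.mem_empty_iff_false, iff_false, not_and, hs₁, hs₃]
          intro h1 h2
          exact absurd (Metric.ball_subset_closedBall h1) h2.2
        rw [h13, Set.image_empty]
      have hsubu : Metric.ball (0:ℂ) d ⊆ f '' s₁ ∪ f '' s₃ := by
        intro w hw
        have hw1 : w ∈ Metric.ball (0:ℂ) 1 := Metric.ball_subset_ball hd1.le hw
        obtain ⟨z, hz, rfl⟩ := hsurj w hw1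
        have hwd : ‖f z‖ < d := by simpa [Complex.dist_eq] using hw
        have hzr : ‖z‖ ≠ r := by
          intro hzr
          have hzs : z ∈ Metric.sphere (0:ℂ) r := by
            rw [Metric.mem_sphere, Complex.dist_eq, sub_zero, hzr]
          exact absurd (lt_of_le_of_lt (isMinOn_iff.1 hz₀min z hzs) hwd) (lt_irrefl d)
        rcases lt_or_gt_of_ne hzr with h | h
        · exact Or.inl ⟨z, by rwa [Metric.mem_ball, Complex.dist_eq, sub_zero], rfl⟩
        · refine Or.inr ⟨z, ⟨hz, ?_⟩, rfl⟩
          rw [Metric.mem_closedBall, Complex.dist_eq, sub_zero]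
          exact not_le.2 h
      have hstart : (Metric.ball (0:ℂ) d ∩ f '' s₁).Nonempty :=
        ⟨0, Metric.mem_ball_self hd0, ⟨0, Metric.mem_ball_self hr0, hf0⟩⟩
      exact ((convex_ball (0:ℂ) d).isPreconnected).subset_left_of_subset_union h1o h3o
        hdisj hsubu hstart
    have hvol : ENNReal.ofReal d ^ 2 * NNReal.pi
        ≤ ENNReal.ofReal π * (expE (ENNReal.ofReal (4 * π)
            * ∫⁻ t in Set.Ioo r 1, (circlePowInt Q 1 0 t)⁻¹ ∂volume))⁻¹ := by
      calc ENNReal.ofReal d ^ 2 * NNReal.pi = volume (Metric.ball (0:ℂ) d) :=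
            (Complex.volume_ball 0 d).symm
        _ ≤ volume (f '' Metric.ball 0 r) := measure_mono hballsub
        _ ≤ _ := hbound r ⟨hr0, hr1⟩
    have h42 : ENNReal.ofReal (4 * π)
        * ∫⁻ t in Set.Ioo r 1, (circlePowInt Q 1 0 t)⁻¹ ∂volume
        = 2 * (ENNReal.ofReal (2 * π)
            * ∫⁻ t in Set.Ioo r 1, (circlePowInt Q 1 0 t)⁻¹ ∂volume) := by
      rw [← mul_assoc]
      congr 1
      rw [show (4:ℝ) * π = 2 * (2 * π) by ring,
        ENNReal.ofReal_mul (by norm_num : (0:ℝ) ≤ 2)]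
      norm_num
    rw [h42] at hvol
    refine ⟨z₀, hz₀abs, ?_⟩
    rw [hz₀abs]
    exact stmt13_arith d (norm_nonneg _) _ hvol
  refine liminf_le_of_frequently_le' ?_
  rw [frequently_iff]
  intro U hU
  rw [mem_nhdsWithin] at hU
  obtain ⟨V, hVopen, hV0, hVU⟩ := hU
  obtain ⟨ε, hε, hball⟩ := Metric.isOpen_iff.1 hVopen 0 hV0
  have hr : min (ε / 2) (1 / 2) ∈ Set.Ioo (0:ℝ) 1 :=
    ⟨lt_min (by positivity) (by norm_num),
      lt_of_le_of_lt (min_le_right _ _) (by norm_num)⟩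
  obtain ⟨z, hz, hgz⟩ := key _ hr
  refine ⟨z, hVU ⟨hball ?_, ?_⟩, hgz⟩
  · rw [Metric.mem_ball, Complex.dist_eq, sub_zero, hz]
    exact lt_of_le_of_lt (min_le_left _ _) (by linarith)
  · simp only [Set.mem_compl_iff, Set.mem_singleton_iff]
    intro h0
    rw [h0] at hz
    simp only [norm_zero] at hz
    exact absurd hz.symm (ne_of_gt hr.1)
end
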